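/- arXiv:2211.14625 — 5 statements merged into one kernel-verified Lean document; each statement's English description precedes it below -/
import Mathlib

section
/- Let s ∈ ℂ and θ ∈ ℝ with e^s ≠ e^{iθ}. Then e^s / (e^s − e^{iθ}) = 1/2 + 1/(s − iθ) + ∑_{n=1}^∞ [ 1/(s − i(θ + 2nπ)) + 1/(s − i(θ − 2nπ)) ], where the series over n ≥ 1 converges absolutely. -/
open Complex

open Complex Filter Finset

open scoped Real Topology

/-- `‖∏ (1 + aⱼ) - 1‖ ≤ ∏ (1 + ‖aⱼ‖) - 1`. -/
lemma aux_norm_prod_sub_one (S : Finset ℕ) (a : ℕ → ℂ) :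
    ‖(∏ j ∈ S, (1 + a j)) - 1‖ ≤ (∏ j ∈ S, (1 + ‖a j‖)) - 1 := by
  induction S using Finset.cons_induction with
  | empty => simp
  | cons i S hi ih =>
    rw [Finset.prod_cons, Finset.prod_cons]
    have hP : ‖∏ j ∈ S, (1 + a j)‖ ≤ ∏ j ∈ S, (1 + ‖a j‖) := by
      refine (Finset.norm_prod_le S _).trans ?_
      exact Finset.prod_le_prod (fun j _ => norm_nonneg _)
        (fun j _ => (norm_add_le _ _).trans (by simp))
    have h1 : (1 + a i) * ∏ j ∈ S, (1 + a j) - 1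
        = ((∏ j ∈ S, (1 + a j)) - 1) + a i * ∏ j ∈ S, (1 + a j) := by ring
    rw [h1]
    calc ‖((∏ j ∈ S, (1 + a j)) - 1) + a i * ∏ j ∈ S, (1 + a j)‖
        ≤ ‖(∏ j ∈ S, (1 + a j)) - 1‖ + ‖a i‖ * ‖∏ j ∈ S, (1 + a j)‖ := by
          simpa [norm_mul] using norm_add_le ((∏ j ∈ S, (1 + a j)) - 1)
            (a i * ∏ j ∈ S, (1 + a j))
      _ ≤ ((∏ j ∈ S, (1 + ‖a j‖)) - 1) + ‖a i‖ * ∏ j ∈ S, (1 + ‖a j‖) := by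
          gcongr
      _ = (1 + ‖a i‖) * ∏ j ∈ S, (1 + ‖a j‖) - 1 := by ring

lemma aux_prod_le_exp (S : Finset ℕ) (g : ℕ → ℝ) (hg : ∀ j, 0 ≤ g j) :
    ∏ j ∈ S, (1 + g j) ≤ Real.exp (∑ j ∈ S, g j) := by
  rw [Real.exp_sum]
  exact Finset.prod_le_prod (fun j _ => by have := hg j; linarith)
    (fun j _ => by simpa [add_comm] using Real.add_one_le_exp (g j))

lemma aux_summable_g (R : ℝ) : Summable (fun j : ℕ => R ^ 2 / ((j : ℝ) + 1) ^ 2) := by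
  have h1 : Summable (fun n : ℕ => 1 / (n : ℝ) ^ 2) :=
    Real.summable_one_div_nat_pow.mpr (by norm_num)
  have h2 := (summable_nat_add_iff 1).mpr h1
  have h3 : Summable (fun j : ℕ => 1 / ((j : ℝ) + 1) ^ 2) := by
    refine h2.congr fun n => ?_
    push_cast
    ring
  simpa [div_eq_mul_inv] using h3.mul_left (R ^ 2)

lemma aux_norm_factor (t : ℂ) (j : ℕ) (R : ℝ) (ht : ‖t‖ ≤ R) :
    ‖t ^ 2 / ((j : ℂ) + 1) ^ 2‖ ≤ R ^ 2 / ((j : ℝ) + 1) ^ 2 := by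
  have hc : ‖((j : ℂ) + 1)‖ = (j : ℝ) + 1 := by
    rw [show ((j : ℂ) + 1) = (((j : ℝ) + 1 : ℝ) : ℂ) by push_cast; ring,
      Complex.norm_real, Real.norm_eq_abs, _root_.abs_of_nonneg (by positivity : (0:ℝ) ≤ (j : ℝ) + 1)]
  rw [norm_div, norm_pow, norm_pow, hc]
  have h0 : (0:ℝ) ≤ ‖t‖ := norm_nonneg t
  gcongr

lemma euler_unif (R : ℝ) (hR : 0 < R) :
    TendstoUniformlyOn
      (fun N : ℕ => fun t : ℂ =>
        (π : ℂ) * t * ∏ j ∈ Finset.range N, (1 - t ^ 2 / ((j : ℂ) + 1) ^ 2))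
      (fun t => Complex.sin ((π : ℂ) * t)) atTop (Metric.ball (0 : ℂ) R) := by
  apply UniformCauchySeqOn.tendstoUniformlyOn_of_tendsto _
    (fun t _ => Complex.tendsto_euler_sin_prod t)
  set g : ℕ → ℝ := fun j => R ^ 2 / ((j : ℝ) + 1) ^ 2 with hgdef
  have hg0 : ∀ j, 0 ≤ g j := fun j => by positivity
  have hgs : Summable g := aux_summable_g R
  set C : ℝ := π * R * Real.exp (∑' j, g j) with hCdef
  have hC0 : 0 < C := by
    have := Real.pi_pos
    positivity
  -- the key estimate
  have key : ∀ m n : ℕ, m ≤ n → ∀ x : ℂ, x ∈ Metric.ball (0 : ℂ) R →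
      dist ((π : ℂ) * x * ∏ j ∈ Finset.range m, (1 - x ^ 2 / ((j : ℂ) + 1) ^ 2))
           ((π : ℂ) * x * ∏ j ∈ Finset.range n, (1 - x ^ 2 / ((j : ℂ) + 1) ^ 2))
        ≤ C * (Real.exp (∑' j, g (j + m)) - 1) := by
    intro m n hmn x hx
    rw [Metric.mem_ball, dist_zero_right] at hx
    have hxR : ‖x‖ ≤ R := hx.le
    have hnf : ∀ j : ℕ, ‖-(x ^ 2 / ((j : ℂ) + 1) ^ 2)‖ ≤ g j := by
      intro j
      rw [norm_neg]
      exact aux_norm_factor x j R hxR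
    have hsplit : (∏ j ∈ Finset.range n, (1 - x ^ 2 / ((j : ℂ) + 1) ^ 2))
        = (∏ j ∈ Finset.range m, (1 - x ^ 2 / ((j : ℂ) + 1) ^ 2)) *
          ∏ j ∈ Finset.Ico m n, (1 - x ^ 2 / ((j : ℂ) + 1) ^ 2) :=
      (Finset.prod_range_mul_prod_Ico _ hmn).symm
    rw [dist_eq_norm, hsplit]
    have heq : (π : ℂ) * x * ∏ j ∈ Finset.range m, (1 - x ^ 2 / ((j : ℂ) + 1) ^ 2)
        - (π : ℂ) * x * ((∏ j ∈ Finset.range m, (1 - x ^ 2 / ((j : ℂ) + 1) ^ 2)) *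
          ∏ j ∈ Finset.Ico m n, (1 - x ^ 2 / ((j : ℂ) + 1) ^ 2))
        = -(((π : ℂ) * x * ∏ j ∈ Finset.range m, (1 - x ^ 2 / ((j : ℂ) + 1) ^ 2)) *
            ((∏ j ∈ Finset.Ico m n, (1 - x ^ 2 / ((j : ℂ) + 1) ^ 2)) - 1)) := by ring
    rw [heq, norm_neg, norm_mul]
    -- bound on the head
    have hhead : ‖(π : ℂ) * x * ∏ j ∈ Finset.range m, (1 - x ^ 2 / ((j : ℂ) + 1) ^ 2)‖ ≤ C := by
      rw [norm_mul, norm_mul]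
      have hπ : ‖(π : ℂ)‖ = π := by
        simp [Complex.norm_real, abs_of_pos Real.pi_pos]
      rw [hπ]
      have hprod : ‖∏ j ∈ Finset.range m, (1 - x ^ 2 / ((j : ℂ) + 1) ^ 2)‖
          ≤ Real.exp (∑' j, g j) := by
        calc ‖∏ j ∈ Finset.range m, (1 - x ^ 2 / ((j : ℂ) + 1) ^ 2)‖
            ≤ ∏ j ∈ Finset.range m, ‖1 - x ^ 2 / ((j : ℂ) + 1) ^ 2‖ :=
              Finset.norm_prod_le _ _
          _ ≤ ∏ j ∈ Finset.range m, (1 + g j) := by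
              refine Finset.prod_le_prod (fun j _ => norm_nonneg _) (fun j _ => ?_)
              calc ‖1 - x ^ 2 / ((j : ℂ) + 1) ^ 2‖ ≤ ‖(1 : ℂ)‖ + ‖x ^ 2 / ((j : ℂ) + 1) ^ 2‖ :=
                    norm_sub_le _ _
                _ ≤ 1 + g j := by
                    simp only [norm_one]
                    gcongr
                    exact aux_norm_factor x j R hxR
          _ ≤ Real.exp (∑ j ∈ Finset.range m, g j) := aux_prod_le_exp _ _ hg0
          _ ≤ Real.exp (∑' j, g j) := by
              apply Real.exp_le_exp.mpr
              exact Summable.sum_le_tsum _ (fun j _ => hg0 j) hgs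
      calc π * ‖x‖ * ‖∏ j ∈ Finset.range m, (1 - x ^ 2 / ((j : ℂ) + 1) ^ 2)‖
          ≤ π * R * Real.exp (∑' j, g j) := by
            have := Real.pi_pos
            gcongr
        _ = C := rfl
    -- bound on the tail
    have htail : ‖(∏ j ∈ Finset.Ico m n, (1 - x ^ 2 / ((j : ℂ) + 1) ^ 2)) - 1‖
        ≤ Real.exp (∑' j, g (j + m)) - 1 := by
      have h1 : ‖(∏ j ∈ Finset.Ico m n, (1 + -(x ^ 2 / ((j : ℂ) + 1) ^ 2))) - 1‖
          ≤ (∏ j ∈ Finset.Ico m n, (1 + ‖-(x ^ 2 / ((j : ℂ) + 1) ^ 2)‖)) - 1 :=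
        aux_norm_prod_sub_one _ _
      have h2 : (∏ j ∈ Finset.Ico m n, (1 + ‖-(x ^ 2 / ((j : ℂ) + 1) ^ 2)‖))
          ≤ ∏ j ∈ Finset.Ico m n, (1 + g j) :=
        Finset.prod_le_prod (fun j _ => by positivity) (fun j _ => by
          have := hnf j; linarith)
      have h3 : ∏ j ∈ Finset.Ico m n, (1 + g j) ≤ Real.exp (∑ j ∈ Finset.Ico m n, g j) :=
        aux_prod_le_exp _ _ hg0
      have h4 : ∑ j ∈ Finset.Ico m n, g j ≤ ∑' j, g (j + m) := by
        rw [Finset.sum_Ico_eq_sum_range]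
        have hsum : Summable (fun j => g (j + m)) := (summable_nat_add_iff m).mpr hgs
        calc ∑ j ∈ Finset.range (n - m), g (m + j)
            = ∑ j ∈ Finset.range (n - m), g (j + m) := by
              refine Finset.sum_congr rfl fun j _ => ?_
              rw [add_comm]
          _ ≤ ∑' j, g (j + m) := Summable.sum_le_tsum _ (fun j _ => hg0 _) hsum
      have := (h1.trans (by linarith)).trans
        (sub_le_sub_right ((h3.trans (Real.exp_le_exp.mpr h4))) 1)
      simpa [sub_eq_add_neg] using this
    exact mul_le_mul hhead htail (norm_nonneg _) hC0.le
  -- conclude uniform Cauchy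
  rw [Metric.uniformCauchySeqOn_iff]
  intro ε hε
  have htail0 : Tendsto (fun M : ℕ => C * (Real.exp (∑' j, g (j + M)) - 1)) atTop (𝓝 0) := by
    have h1 : Tendsto (fun M : ℕ => ∑' j, g (j + M)) atTop (𝓝 0) := by
      simpa using tendsto_sum_nat_add g
    have h2 : Tendsto (fun M : ℕ => Real.exp (∑' j, g (j + M)) - 1) atTop (𝓝 0) := by
      have := (Real.continuous_exp.tendsto 0).comp h1
      rw [Real.exp_zero] at this
      simpa using this.sub_const 1
    simpa using h2.const_mul C
  have hev := (htail0.eventually (gt_mem_nhds hε))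
  rw [eventually_atTop] at hev
  obtain ⟨N, hN⟩ := hev
  refine ⟨N, fun m hm n hn x hx => ?_⟩
  rcases le_total m n with hmn | hmn
  · exact lt_of_le_of_lt (key m n hmn x hx) (hN m hm)
  · rw [dist_comm]
    exact lt_of_le_of_lt (key n m hmn x hx) (hN n hn)

lemma aux_sub_ne (x : ℂ) (hx : ∀ k : ℤ, x ≠ (k : ℂ)) (j : ℕ) : x - ((j : ℂ) + 1) ≠ 0 := by
  rw [sub_ne_zero]
  have := hx ((j : ℤ) + 1)
  intro hc
  apply this
  rw [hc]; push_cast; ring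

lemma aux_add_ne (x : ℂ) (hx : ∀ k : ℤ, x ≠ (k : ℂ)) (j : ℕ) : x + ((j : ℂ) + 1) ≠ 0 := by
  have := hx (-((j : ℤ) + 1))
  intro hc
  apply this
  have : x = -((j : ℂ) + 1) := by linear_combination hc
  rw [this]; push_cast; ring

lemma aux_fac_ne (x : ℂ) (hx : ∀ k : ℤ, x ≠ (k : ℂ)) (j : ℕ) :
    1 - x ^ 2 / ((j : ℂ) + 1) ^ 2 ≠ 0 := by
  have hc : ((j : ℂ) + 1) ≠ 0 := by
    have : ((j + 1 : ℕ) : ℂ) ≠ 0 := Nat.cast_ne_zero.mpr j.succ_ne_zero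
    push_cast at this; exact this
  intro hzero
  have hx2 : x ^ 2 = ((j : ℂ) + 1) ^ 2 := by
    field_simp at hzero
    linear_combination -hzero
  have : (x - ((j : ℂ) + 1)) * (x + ((j : ℂ) + 1)) = 0 := by linear_combination hx2
  rcases mul_eq_zero.mp this with h | h
  · exact aux_sub_ne x hx j h
  · exact aux_add_ne x hx j h

lemma aux_logDeriv_factor (x : ℂ) (hx : ∀ k : ℤ, x ≠ (k : ℂ)) (j : ℕ) :
    logDeriv (fun t : ℂ => 1 - t ^ 2 / ((j : ℂ) + 1) ^ 2) x
      = (x - ((j : ℂ) + 1))⁻¹ + (x + ((j : ℂ) + 1))⁻¹ := by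
  have hc : ((j : ℂ) + 1) ≠ 0 := by
    have : ((j + 1 : ℕ) : ℂ) ≠ 0 := Nat.cast_ne_zero.mpr j.succ_ne_zero
    push_cast at this; exact this
  have hder : HasDerivAt (fun t : ℂ => 1 - t ^ 2 / ((j : ℂ) + 1) ^ 2)
      (-(2 * x / ((j : ℂ) + 1) ^ 2)) x := by
    have := ((hasDerivAt_pow 2 x).div_const (((j : ℂ) + 1) ^ 2)).const_sub 1
    simpa [pow_one, mul_comm, mul_div_assoc] using this
  rw [logDeriv_apply, hder.deriv]
  have h1 := aux_sub_ne x hx j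
  have h2 := aux_add_ne x hx j
  have h3 := aux_fac_ne x hx j
  rw [inv_add_inv h1 h2, div_eq_div_iff h3 (mul_ne_zero h1 h2)]
  field_simp
  ring

lemma aux_logDeriv_partial (N : ℕ) (x : ℂ) (hx : ∀ k : ℤ, x ≠ (k : ℂ)) :
    logDeriv (fun t : ℂ =>
        (π : ℂ) * t * ∏ j ∈ Finset.range N, (1 - t ^ 2 / ((j : ℂ) + 1) ^ 2)) x
      = 1 / x + ∑ j ∈ Finset.range N, ((x - ((j : ℂ) + 1))⁻¹ + (x + ((j : ℂ) + 1))⁻¹) := by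
  have hπ : ((π : ℝ) : ℂ) ≠ 0 := Complex.ofReal_ne_zero.mpr Real.pi_ne_zero
  have hx0 : x ≠ 0 := by simpa using hx 0
  have hdf : ∀ j : ℕ, DifferentiableAt ℂ (fun t : ℂ => 1 - t ^ 2 / ((j : ℂ) + 1) ^ 2) x :=
    fun j => ((differentiableAt_id.pow 2).div_const _).const_sub 1
  rw [logDeriv_mul x (mul_ne_zero hπ hx0)
      (Finset.prod_ne_zero_iff.mpr fun j _ => aux_fac_ne x hx j)
      (by fun_prop) (DifferentiableAt.fun_finsetProd fun j _ => hdf j)]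
  congr 1
  · show logDeriv (fun t : ℂ => (π : ℂ) * id t) x = 1 / x
    rw [logDeriv_const_mul x _ hπ, logDeriv_id]
  · rw [logDeriv_prod (fun j _ => aux_fac_ne x hx j) (fun j _ => hdf j)]
    exact Finset.sum_congr rfl fun j _ => aux_logDeriv_factor x hx j

lemma aux_norm_cast (j : ℕ) : ‖((j : ℂ) + 1)‖ = (j : ℝ) + 1 := by
  rw [show ((j : ℂ) + 1) = (((j : ℝ) + 1 : ℝ) : ℂ) by push_cast; ring,
    Complex.norm_real, Real.norm_eq_abs,
    _root_.abs_of_nonneg (by positivity : (0:ℝ) ≤ (j : ℝ) + 1)]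

lemma aux_summable_norm (x : ℂ) (hx : ∀ k : ℤ, x ≠ (k : ℂ)) :
    Summable (fun n : ℕ => ‖(x - ((n : ℂ) + 1))⁻¹ + (x + ((n : ℂ) + 1))⁻¹‖) := by
  have haeq : ∀ n : ℕ, (x - ((n : ℂ) + 1))⁻¹ + (x + ((n : ℂ) + 1))⁻¹
      = 2 * x / (x ^ 2 - ((n : ℂ) + 1) ^ 2) := by
    intro n
    rw [inv_add_inv (aux_sub_ne x hx n) (aux_add_ne x hx n)]
    congr 1
    · ring
    · ring
  have hgsum : Summable (fun n : ℕ => 4 * ‖x‖ / ((n : ℝ) + 1) ^ 2) := by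
    refine ((aux_summable_g 1).mul_left (4 * ‖x‖)).congr fun n => ?_
    rw [one_pow, mul_one_div]
  have hT : Tendsto (fun n : ℕ => ((n : ℝ) + 1) ^ 2) atTop atTop := by
    have h1 : Tendsto (fun n : ℕ => (n : ℝ) + 1) atTop atTop :=
      tendsto_atTop_add_const_right _ 1 tendsto_natCast_atTop_atTop
    exact (tendsto_pow_atTop (two_ne_zero)).comp h1
  have hev : ∀ᶠ n : ℕ in atTop, 2 * ‖x‖ ^ 2 ≤ ((n : ℝ) + 1) ^ 2 :=
    hT.eventually_ge_atTop _
  apply Summable.of_norm_bounded_eventually_nat hgsum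
  filter_upwards [hev] with n hn
  rw [norm_norm, haeq n, norm_div]
  have hcnorm : ‖((n : ℂ) + 1) ^ 2‖ = ((n : ℝ) + 1) ^ 2 := by
    rw [norm_pow, aux_norm_cast]
  have hD : ((n : ℝ) + 1) ^ 2 / 2 ≤ ‖x ^ 2 - ((n : ℂ) + 1) ^ 2‖ := by
    have h5 : ((n : ℝ) + 1) ^ 2 - ‖x‖ ^ 2 ≤ ‖x ^ 2 - ((n : ℂ) + 1) ^ 2‖ := by
      calc ((n : ℝ) + 1) ^ 2 - ‖x‖ ^ 2 = ‖((n : ℂ) + 1) ^ 2‖ - ‖x ^ 2‖ := by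
            rw [hcnorm, norm_pow]
        _ ≤ ‖((n : ℂ) + 1) ^ 2 - x ^ 2‖ := norm_sub_norm_le _ _
        _ = ‖x ^ 2 - ((n : ℂ) + 1) ^ 2‖ := norm_sub_rev _ _
    linarith
  have hDpos : (0:ℝ) < ((n : ℝ) + 1) ^ 2 / 2 := by positivity
  have h2x : ‖2 * x‖ = 2 * ‖x‖ := by rw [norm_mul]; norm_num
  calc ‖2 * x‖ / ‖x ^ 2 - ((n : ℂ) + 1) ^ 2‖
      ≤ ‖2 * x‖ / (((n : ℝ) + 1) ^ 2 / 2) := by gcongr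
    _ = 4 * ‖x‖ / ((n : ℝ) + 1) ^ 2 := by rw [h2x]; field_simp; ring

/-- For `s ∈ ℂ` and `θ ∈ ℝ` with `e^s ≠ e^{iθ}`,
`e^s/(e^s - e^{iθ}) = 1/2 + 1/(s - iθ) + ∑_{n≥1} [1/(s - i(θ + 2nπ)) + 1/(s - i(θ - 2nπ))]`,
where the series over `n ≥ 1` converges absolutely. -/
theorem logDeriv_partial_fraction (s : ℂ) (θ : ℝ)
    (h : Complex.exp s ≠ Complex.exp (Complex.I * θ)) :
    Summable (fun n : ℕ =>
      ‖(s - Complex.I * ((θ : ℂ) + 2 * ((n : ℂ) + 1) * (Real.pi : ℂ)))⁻¹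
        + (s - Complex.I * ((θ : ℂ) - 2 * ((n : ℂ) + 1) * (Real.pi : ℂ)))⁻¹‖)
    ∧ HasSum (fun n : ℕ =>
        (s - Complex.I * ((θ : ℂ) + 2 * ((n : ℂ) + 1) * (Real.pi : ℂ)))⁻¹
          + (s - Complex.I * ((θ : ℂ) - 2 * ((n : ℂ) + 1) * (Real.pi : ℂ)))⁻¹)
        (Complex.exp s / (Complex.exp s - Complex.exp (Complex.I * θ))
          - 1 / 2 - (s - Complex.I * θ)⁻¹) := by
  have hpiC : ((π : ℝ) : ℂ) ≠ 0 := Complex.ofReal_ne_zero.mpr Real.pi_ne_zero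
  have hI : Complex.I ≠ 0 := Complex.I_ne_zero
  have h2piI : (2 * (π : ℂ) * Complex.I) ≠ 0 :=
    mul_ne_zero (mul_ne_zero two_ne_zero hpiC) hI
  set w : ℂ := s - Complex.I * (θ : ℂ) with hw
  set x : ℂ := w / (2 * (π : ℂ) * Complex.I) with hxdef
  have hxw : 2 * (π : ℂ) * Complex.I * x = w := by
    rw [hxdef]; field_simp
  have hse : Complex.exp s = Complex.exp w * Complex.exp (Complex.I * θ) := by
    rw [← Complex.exp_add]; congr 1; rw [hw]; ring
  have hexpw : Complex.exp w ≠ 1 := by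
    intro hE
    apply h
    rw [hse, hE, one_mul]
  have hx : ∀ k : ℤ, x ≠ (k : ℂ) := by
    intro k hk
    apply hexpw
    rw [← hxw, hk, show 2 * (π : ℂ) * Complex.I * (k : ℂ)
        = (k : ℂ) * (2 * (π : ℂ) * Complex.I) by ring,
      Complex.exp_int_mul_two_pi_mul_I]
  have hx0 : x ≠ 0 := by simpa using hx 0
  have hw0 : w ≠ 0 := by rw [← hxw]; exact mul_ne_zero h2piI hx0
  have hsin : Complex.sin ((π : ℂ) * x) ≠ 0 := by
    intro h0
    rcases Complex.sin_eq_zero_iff.mp h0 with ⟨k, hk⟩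
    exact hx k (mul_left_cancel₀ hpiC (by rw [hk]; ring))
  set L : ℂ := logDeriv (fun t : ℂ => Complex.sin ((π : ℂ) * t)) x with hL
  have hLval : L = (π : ℂ) * Complex.cos ((π : ℂ) * x) / Complex.sin ((π : ℂ) * x) := by
    rw [hL]
    have hcomp : (fun t : ℂ => Complex.sin ((π : ℂ) * t))
        = Complex.sin ∘ (fun t : ℂ => (π : ℂ) * t) := rfl
    rw [hcomp, logDeriv_comp (Complex.differentiable_sin.differentiableAt) (by fun_prop)]
    have hd : deriv (fun t : ℂ => (π : ℂ) * t) x = (π : ℂ) := by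
      simpa using ((hasDerivAt_id x).const_mul ((π : ℂ))).deriv
    rw [hd, logDeriv_apply, Complex.deriv_sin]
    ring
  have hball : x ∈ Metric.ball (0 : ℂ) (‖x‖ + 1) :=
    Metric.mem_ball.mpr (by rw [dist_zero_right]; exact lt_add_one _)
  have htend : Tendsto (fun N : ℕ => logDeriv
      (fun t : ℂ => (π : ℂ) * t * ∏ j ∈ Finset.range N, (1 - t ^ 2 / ((j : ℂ) + 1) ^ 2)) x)
      atTop (𝓝 L) := by
    refine logDeriv_tendsto Metric.isOpen_ball hball
      ((euler_unif (‖x‖ + 1) (by positivity)).tendstoLocallyUniformlyOn) ?_ hsin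
    refine Eventually.of_forall fun N => Differentiable.differentiableOn fun z => ?_
    exact ((differentiableAt_const _).mul differentiableAt_id).mul
      (DifferentiableAt.fun_finsetProd fun j _ =>
        ((differentiableAt_id.pow 2).div_const _).const_sub 1)
  have hsum_tend : Tendsto (fun N : ℕ => ∑ j ∈ Finset.range N,
      ((x - ((j : ℂ) + 1))⁻¹ + (x + ((j : ℂ) + 1))⁻¹)) atTop (𝓝 (L - 1 / x)) := by
    rw [show (fun N : ℕ => logDeriv (fun t : ℂ =>
        (π : ℂ) * t * ∏ j ∈ Finset.range N, (1 - t ^ 2 / ((j : ℂ) + 1) ^ 2)) x)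
      = fun N : ℕ => 1 / x + ∑ j ∈ Finset.range N,
          ((x - ((j : ℂ) + 1))⁻¹ + (x + ((j : ℂ) + 1))⁻¹) from
      funext fun N => aux_logDeriv_partial N x hx] at htend
    simpa using htend.sub_const (1 / x)
  have hsummable : Summable (fun n : ℕ => (x - ((n : ℂ) + 1))⁻¹ + (x + ((n : ℂ) + 1))⁻¹) :=
    (aux_summable_norm x hx).of_norm
  have hhs : HasSum (fun n : ℕ => (x - ((n : ℂ) + 1))⁻¹ + (x + ((n : ℂ) + 1))⁻¹) (L - 1 / x) := by
    have h3 := hsummable.hasSum.tendsto_sum_nat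
    have h4 := tendsto_nhds_unique h3 hsum_tend
    exact h4 ▸ hsummable.hasSum
  have hAa : ∀ n : ℕ, (2 * (π : ℂ) * Complex.I)⁻¹ * ((x - ((n : ℂ) + 1))⁻¹ + (x + ((n : ℂ) + 1))⁻¹)
      = (s - Complex.I * ((θ : ℂ) + 2 * ((n : ℂ) + 1) * (π : ℂ)))⁻¹
        + (s - Complex.I * ((θ : ℂ) - 2 * ((n : ℂ) + 1) * (π : ℂ)))⁻¹ := by
    intro n
    have e1 : s - Complex.I * ((θ : ℂ) + 2 * ((n : ℂ) + 1) * (π : ℂ))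
        = (2 * (π : ℂ) * Complex.I) * (x - ((n : ℂ) + 1)) := by
      linear_combination -hw - hxw
    have e2 : s - Complex.I * ((θ : ℂ) - 2 * ((n : ℂ) + 1) * (π : ℂ))
        = (2 * (π : ℂ) * Complex.I) * (x + ((n : ℂ) + 1)) := by
      linear_combination -hw - hxw
    rw [e1, e2, mul_add, ← mul_inv, ← mul_inv]
  have hval : (2 * (π : ℂ) * Complex.I)⁻¹ * (L - 1 / x)
      = Complex.exp s / (Complex.exp s - Complex.exp (Complex.I * θ)) - 1 / 2 - w⁻¹ := by
    have hcot := Complex.cot_eq_exp_ratio ((π : ℂ) * x)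
    rw [Complex.cot_eq_cos_div_sin] at hcot
    have h2Ix : 2 * Complex.I * ((π : ℂ) * x) = w := by rw [← hxw]; ring
    rw [h2Ix] at hcot
    have hq : Complex.exp (Complex.I * (θ : ℂ)) ≠ 0 := Complex.exp_ne_zero _
    have hE1 : Complex.exp w - 1 ≠ 0 := sub_ne_zero.mpr hexpw
    have h1E : (1 : ℂ) - Complex.exp w ≠ 0 := sub_ne_zero.mpr (Ne.symm hexpw)
    have h1x : 1 / x = 2 * (π : ℂ) * Complex.I / w := by rw [hxdef, one_div_div]
    have hden : Complex.exp w * Complex.exp (Complex.I * (θ : ℂ))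
        - Complex.exp (Complex.I * (θ : ℂ)) ≠ 0 := by
      rw [show Complex.exp w * Complex.exp (Complex.I * (θ : ℂ))
          - Complex.exp (Complex.I * (θ : ℂ))
        = (Complex.exp w - 1) * Complex.exp (Complex.I * (θ : ℂ)) by ring]
      exact mul_ne_zero hE1 hq
    have hB : (2 * (π : ℂ) * Complex.I)⁻¹ * L
        = (Complex.exp w + 1) / (2 * (Complex.exp w - 1)) := by
      have hL2 : L = (π : ℂ) * ((Complex.exp w + 1) / (Complex.I * (1 - Complex.exp w))) := by
        rw [hLval, mul_div_assoc, hcot]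
      apply mul_left_cancel₀ h2piI
      rw [← mul_assoc, mul_inv_cancel₀ h2piI, one_mul, hL2]
      rw [← mul_div_assoc, ← mul_div_assoc,
        div_eq_div_iff (mul_ne_zero hI h1E) (mul_ne_zero two_ne_zero hE1)]
      linear_combination (-(2:ℂ) * (π : ℂ) * (Complex.exp w + 1) * (1 - Complex.exp w))
        * Complex.I_mul_I
    have hC : (2 * (π : ℂ) * Complex.I)⁻¹ * (1 / x) = w⁻¹ := by
      rw [h1x]
      field_simp
    rw [mul_sub, hB, hC, hse]
    have hfinal : (Complex.exp w + 1) / (2 * (Complex.exp w - 1))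
        = Complex.exp w * Complex.exp (Complex.I * (θ : ℂ)) /
          (Complex.exp w * Complex.exp (Complex.I * (θ : ℂ))
            - Complex.exp (Complex.I * (θ : ℂ))) - 1 / 2 := by
      rw [div_sub_div _ _ hden two_ne_zero,
        div_eq_div_iff (mul_ne_zero two_ne_zero hE1) (mul_ne_zero hden two_ne_zero)]
      ring
    rw [hfinal]
  constructor
  · refine ((aux_summable_norm x hx).mul_left ‖(2 * (π : ℂ) * Complex.I)⁻¹‖).congr fun n => ?_
    rw [← hAa n, norm_mul]
  · have h5 := hhs.mul_left ((2 * (π : ℂ) * Complex.I)⁻¹)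
    rw [show (fun n : ℕ => (2 * (π : ℂ) * Complex.I)⁻¹ *
        ((x - ((n : ℂ) + 1))⁻¹ + (x + ((n : ℂ) + 1))⁻¹))
      = fun n : ℕ => (s - Complex.I * ((θ : ℂ) + 2 * ((n : ℂ) + 1) * (π : ℂ)))⁻¹
          + (s - Complex.I * ((θ : ℂ) - 2 * ((n : ℂ) + 1) * (π : ℂ)))⁻¹ from
      funext hAa, hval] at h5
    exact h5
end

section
/- For every integer N ≥ 2 and every N×N unitary matrix U, setting s₀ = log(1 − 1/N) (a negative real number) and z₀ = e^{s₀} = 1 − 1/N, one has 0 < ∑_{j=1}^N (−s₀)/(s₀² + θ_j²) ≤ N/2 + | z₀ · (P′_U/P_U)(z₀) |. -/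
open Matrix

/-- The multiset of eigenvalues of `U` (roots of its characteristic polynomial,
listed with multiplicity); each eigenvalue is `e^{iθ_j}` with `θ_j = arg` in `(-π, π]`. -/
noncomputable def eigenvalues (N : ℕ) (U : Matrix.unitaryGroup (Fin N) ℂ) : Multiset ℂ :=
  (Matrix.charpoly (U : Matrix (Fin N) (Fin N) ℂ)).roots

lemma aux_exp1 (t : ℝ) (ht : 0 ≤ t) : 2 * (Real.exp t - 1) ≤ t * (Real.exp t + 1) := by
  have hg : ∀ x : ℝ, HasDerivAt (fun x => x * (Real.exp x + 1) - 2 * (Real.exp x - 1))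
      (1 - (1 - x) * Real.exp x) x := by
    intro x
    have h := ((hasDerivAt_id x).mul ((Real.hasDerivAt_exp x).add_const 1)).sub
      (((Real.hasDerivAt_exp x).sub_const 1).const_mul 2)
    refine h.congr_deriv ?_
    simp [id]
    ring
  have hmono : Monotone (fun x => x * (Real.exp x + 1) - 2 * (Real.exp x - 1)) := by
    apply monotone_of_deriv_nonneg
    · exact fun x => (hg x).differentiableAt
    · intro x
      rw [(hg x).deriv]
      have h1 : 1 - x ≤ Real.exp (-x) := by
        have := Real.add_one_le_exp (-x); linarith
      have h2 : (1 - x) * Real.exp x ≤ Real.exp (-x) * Real.exp x :=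
        mul_le_mul_of_nonneg_right h1 (Real.exp_pos x).le
      rw [← Real.exp_add] at h2
      simp at h2
      linarith
  have h0 := hmono ht
  simp [Real.exp_zero] at h0
  linarith

lemma aux_exp2 (t : ℝ) (ht : 0 ≤ t) : 2 * t ≤ Real.exp t - Real.exp (-t) := by
  rcases eq_or_lt_of_le ht with h | h
  · simp [← h]
  · have := Real.self_lt_sinh_iff.mpr h
    rw [Real.sinh_eq] at this
    linarith

lemma aux_pointwise (t θ : ℝ) (ht : 0 < t) :
    t / (t ^ 2 + θ ^ 2) ≤
      (1 - Real.exp (-t) ^ 2) /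
        (2 * ((Real.exp (-t) - Real.cos θ) ^ 2 + Real.sin θ ^ 2)) := by
  set z := Real.exp (-t) with hz
  have hz0 : 0 < z := Real.exp_pos _
  have hz1 : z < 1 := by
    have : Real.exp (-t) < Real.exp 0 := Real.exp_lt_exp.mpr (by linarith)
    simpa [hz] using this
  have hzet : z * Real.exp t = 1 := by rw [hz, ← Real.exp_add]; simp
  have h1 : 2 * (1 - z) ≤ t * (1 + z) := by
    have h := aux_exp1 t ht.le
    nlinarith [mul_le_mul_of_nonneg_left h hz0.le]
  have h2 : 2 * t * z ≤ 1 - z ^ 2 := by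
    have h := aux_exp2 t ht.le
    nlinarith [mul_le_mul_of_nonneg_left h hz0.le]
  have hcos : 1 - Real.cos θ ≤ θ ^ 2 / 2 := by
    have h := Real.sin_sq_le_sq (x := θ / 2)
    have hc := Real.cos_two_mul (θ / 2)
    have hs := Real.sin_sq_add_cos_sq (θ / 2)
    have h2 : 2 * (θ / 2) = θ := by ring
    rw [h2] at hc
    nlinarith
  have hsc := Real.sin_sq_add_cos_sq θ
  have hD : 0 < (z - Real.cos θ) ^ 2 + Real.sin θ ^ 2 := by
    nlinarith [Real.cos_le_one θ, mul_pos (sub_pos.2 hz1) (sub_pos.2 hz1),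
      mul_le_mul_of_nonneg_left (Real.cos_le_one θ) (by positivity : (0:ℝ) ≤ 2 * z)]
  rw [div_le_div_iff₀ (by positivity) (by positivity)]
  have hA := mul_le_mul_of_nonneg_left h1 (mul_nonneg ht.le (sub_pos.2 hz1).le)
  have hB1 := mul_le_mul_of_nonneg_left hcos (by positivity : (0:ℝ) ≤ 4 * t * z)
  have hB2 := mul_le_mul_of_nonneg_right h2 (sq_nonneg θ)
  nlinarith [hA, hB1, hB2]

open ComplexOrder in
lemma abs_eigenvalue_eq_one {N : ℕ} (U : Matrix.unitaryGroup (Fin N) ℂ) {lam : ℂ}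
    (h : lam ∈ eigenvalues N U) : ‖lam‖ = 1 := by
  set M : Matrix (Fin N) (Fin N) ℂ := (U : Matrix (Fin N) (Fin N) ℂ) with hM
  have hroot : (Matrix.charpoly M).IsRoot lam := Polynomial.isRoot_of_mem_roots h
  have hdet : (lam • (1 : Matrix (Fin N) (Fin N) ℂ) - M).det = 0 := by
    have h1 := RingHom.map_det (Polynomial.evalRingHom lam) (Matrix.charmatrix M)
    rw [RingHom.mapMatrix_apply] at h1
    have h2 : (Matrix.charmatrix M).map (Polynomial.evalRingHom lam)
        = lam • (1 : Matrix (Fin N) (Fin N) ℂ) - M := by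
      ext i j
      rcases eq_or_ne i j with rfl | hij
      · simp [Matrix.charmatrix_apply_eq, Matrix.one_apply]
      · simp [Matrix.charmatrix_apply_ne _ _ _ hij, Matrix.one_apply_ne hij]
    rw [h2] at h1
    rw [← h1]
    simpa [Matrix.charpoly] using hroot
  obtain ⟨v, hv0, hv⟩ := (Matrix.exists_mulVec_eq_zero_iff).mpr hdet
  have hUv : M *ᵥ v = lam • v := by
    rw [Matrix.sub_mulVec, Matrix.smul_mulVec, Matrix.one_mulVec] at hv
    have := sub_eq_zero.mp hv
    exact this.symm
  have hstar : Mᴴ * M = 1 := by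
    have := U.2
    rw [Unitary.mem_iff] at this
    simpa [Matrix.star_eq_conjTranspose] using this.1
  have hkey : star v ⬝ᵥ v = (starRingEnd ℂ) lam * lam * (star v ⬝ᵥ v) := by
    calc star v ⬝ᵥ v = star v ⬝ᵥ ((Mᴴ * M) *ᵥ v) := by rw [hstar, Matrix.one_mulVec]
    _ = star v ⬝ᵥ (Mᴴ *ᵥ (M *ᵥ v)) := by rw [Matrix.mulVec_mulVec]
    _ = (star v ᵥ* Mᴴ) ⬝ᵥ (M *ᵥ v) := by rw [Matrix.dotProduct_mulVec]
    _ = star (M *ᵥ v) ⬝ᵥ (M *ᵥ v) := by rw [Matrix.star_mulVec]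
    _ = star (lam • v) ⬝ᵥ (lam • v) := by rw [hUv]
    _ = (starRingEnd ℂ) lam * lam * (star v ⬝ᵥ v) := by
        simp [smul_dotProduct, dotProduct_smul, smul_eq_mul]
        ring
  have hvv : star v ⬝ᵥ v ≠ 0 := fun hc => hv0 (dotProduct_star_self_eq_zero.mp hc)
  have hone : (starRingEnd ℂ) lam * lam = 1 := by
    have h' : (1 : ℂ) * (star v ⬝ᵥ v) = ((starRingEnd ℂ) lam * lam) * (star v ⬝ᵥ v) := by
      rw [one_mul]; exact hkey
    exact (mul_right_cancel₀ hvv h'.symm)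
  have hnsq : Complex.normSq lam = 1 := by
    have := Complex.normSq_eq_conj_mul_self (z := lam)
    rw [hone] at this
    exact_mod_cast this
  rw [Complex.norm_def, hnsq, Real.sqrt_one]

/-- For every `N ≥ 2` and every unitary `U`, with `s₀ = log(1 - 1/N)` and
`z₀ = 1 - 1/N`, one has `0 < ∑_{j=1}^N (-s₀)/(s₀² + θ_j²) ≤ N/2 + |z₀ (P'_U/P_U)(z₀)|`,
where `(P'_U/P_U)(z₀) = ∑_j 1/(z₀ - e^{iθ_j})` and `θ_j = arg(e^{iθ_j}) ∈ (-π, π]`. -/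
theorem weighted_sum_bound (N : ℕ) (hN : 2 ≤ N) (U : Matrix.unitaryGroup (Fin N) ℂ) :
    0 < (((eigenvalues N U).map
          (fun lam => (-(Real.log (1 - 1 / N))) /
            ((Real.log (1 - 1 / N)) ^ 2 + (Complex.arg lam) ^ 2))).sum)
    ∧ (((eigenvalues N U).map
          (fun lam => (-(Real.log (1 - 1 / N))) /
            ((Real.log (1 - 1 / N)) ^ 2 + (Complex.arg lam) ^ 2))).sum)
        ≤ N / 2 + ‖(((1 - 1 / N : ℝ)) : ℂ) *
            ((eigenvalues N U).map (fun lam => (((1 - 1 / N : ℝ) : ℂ) - lam)⁻¹)).sum‖ := by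
  have hN' : (2 : ℝ) ≤ (N : ℝ) := by exact_mod_cast hN
  set z : ℝ := 1 - 1 / (N : ℝ) with hzdef
  set s : ℝ := Real.log z with hsdef
  set m : Multiset ℂ := eigenvalues N U with hmdef
  have hNpos : (0 : ℝ) < N := by linarith
  have hz0 : 0 < z := by
    rw [hzdef]
    have : 1 / (N : ℝ) ≤ 1 / 2 := by
      apply one_div_le_one_div_of_le <;> linarith
    linarith
  have hz1 : z < 1 := by
    rw [hzdef]
    have : 0 < 1 / (N : ℝ) := by positivity
    linarith
  have hs : s < 0 := Real.log_neg hz0 hz1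
  have hexp : Real.exp (-(-s)) = z := by rw [neg_neg, hsdef, Real.exp_log hz0]
  -- cardinality
  have hcard : Multiset.card m = N := by
    rw [hmdef, eigenvalues]
    have h2 := (Polynomial.splits_iff_card_roots
      (f := Matrix.charpoly (U : Matrix (Fin N) (Fin N) ℂ))).mp
      (IsAlgClosed.splits _)
    rw [h2, Matrix.charpoly_natDegree_eq_dim, Fintype.card_fin]
  -- pointwise bound
  have key : ∀ lam ∈ m, (-s) / (s ^ 2 + (Complex.arg lam) ^ 2)
      ≤ 1 / 2 - (((z : ℂ)) * (((z : ℂ)) - lam)⁻¹).re := by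
    intro lam hlam
    have habs : ‖lam‖ = 1 := abs_eigenvalue_eq_one U hlam
    have hlam0 : lam ≠ 0 := by
      intro hc; rw [hc] at habs; simp at habs
    have hre : lam.re = Real.cos (Complex.arg lam) := by
      rw [Complex.cos_arg hlam0, habs, div_one]
    have him : lam.im = Real.sin (Complex.arg lam) := by
      rw [Complex.sin_arg, habs, div_one]
    have hw : ((z : ℂ)) - lam ≠ 0 := by
      intro hc
      have : lam = (z : ℂ) := by linear_combination -hc
      rw [this] at habs
      rw [Complex.norm_of_nonneg hz0.le] at habs
      linarith
    set D : ℝ := (z - lam.re) ^ 2 + lam.im ^ 2 with hDdef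
    have hDnorm : Complex.normSq ((z : ℂ) - lam) = D := by
      rw [Complex.normSq_apply, hDdef]
      simp [Complex.sub_re, Complex.sub_im]
      ring
    have hDpos : 0 < D := by
      rw [← hDnorm]
      exact Complex.normSq_pos.mpr hw
    have hre' : (((z : ℂ)) * (((z : ℂ)) - lam)⁻¹).re = z * (z - lam.re) / D := by
      rw [Complex.mul_re, Complex.inv_re, Complex.inv_im, hDnorm]
      simp [Complex.sub_re, Complex.sub_im]
      ring
    have hnorm1 : lam.re ^ 2 + lam.im ^ 2 = 1 := by
      have h := Complex.sq_norm lam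
      rw [habs, Complex.normSq_apply] at h
      nlinarith
    have heq : 1 / 2 - (((z : ℂ)) * (((z : ℂ)) - lam)⁻¹).re = (1 - z ^ 2) / (2 * D) := by
      rw [hre']
      field_simp
      linear_combination hnorm1
    have hp := aux_pointwise (-s) (Complex.arg lam) (by linarith)
    rw [hexp] at hp
    rw [← hre, ← him, neg_sq] at hp
    rw [heq, hDdef]
    exact hp
  constructor
  · -- positivity
    have hm0 : m ≠ 0 := by
      intro hc
      rw [hc] at hcard
      simp at hcard
      omega
    obtain ⟨lam, hlam⟩ := Multiset.exists_mem_of_ne_zero hm0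
    have hpos : 0 < (-s) / (s ^ 2 + (Complex.arg lam) ^ 2) := by
      apply div_pos (by linarith)
      have hs0 : s ≠ 0 := ne_of_lt hs
      positivity
    have hmem : (-s) / (s ^ 2 + (Complex.arg lam) ^ 2) ∈
        m.map (fun lam => (-s) / (s ^ 2 + (Complex.arg lam) ^ 2)) :=
      Multiset.mem_map_of_mem _ hlam
    have hle := Multiset.single_le_sum (s := m.map
        (fun lam => (-s) / (s ^ 2 + (Complex.arg lam) ^ 2)))
      (fun x hx => by
        obtain ⟨a, _, rfl⟩ := Multiset.mem_map.mp hx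
        apply div_nonneg (by linarith)
        positivity) _ hmem
    linarith
  · have hsum_le := Multiset.sum_map_le_sum_map _ _ key
    have h1 : ((z : ℂ) * (m.map (fun lam => (((z : ℂ)) - lam)⁻¹)).sum)
        = (m.map (fun lam => (z : ℂ) * (((z : ℂ)) - lam)⁻¹)).sum := by
      rw [← Multiset.sum_map_mul_left]
    have hsplit : (m.map (fun lam => 1 / 2 - (((z : ℂ)) * (((z : ℂ)) - lam)⁻¹).re)).sum
        = (N : ℝ) / 2 - (((z : ℂ)) * (m.map (fun lam => (((z : ℂ)) - lam)⁻¹)).sum).re := by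
      rw [Multiset.sum_map_sub]
      congr 1
      · rw [Multiset.map_const', Multiset.sum_replicate, hcard, nsmul_eq_mul]
        ring
      · rw [h1]
        have h2 := Complex.reAddGroupHom.map_multiset_sum
          (m.map (fun lam => (z : ℂ) * (((z : ℂ)) - lam)⁻¹))
        simp only [Complex.reAddGroupHom, AddMonoidHom.coe_mk, ZeroHom.coe_mk,
          Multiset.map_map, Function.comp] at h2
        exact h2.symm
    refine le_trans hsum_le ?_
    rw [hsplit]
    have habsre := Complex.abs_re_le_norm ((z : ℂ) * (m.map (fun lam => (((z : ℂ)) - lam)⁻¹)).sum)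
    have hneg := neg_abs_le (((z : ℂ) * (m.map (fun lam => (((z : ℂ)) - lam)⁻¹)).sum).re)
    linarith
end

section
/- There exists an absolute constant C > 0 such that for every integer N ≥ 2 and every N×N unitary matrix U, the number of eigenvalue angles with |θ_j| < 1/N satisfies #{ j : |θ_j| < 1/N } ≤ C · ( N + | (P′_U/P_U)(1 − 1/N) | ) / N. -/
open Matrix
open scoped Classical

section aux

open Polynomial Complex
open scoped ComplexOrder

lemma aux_eval_charpoly {n : Type*} [Fintype n] [DecidableEq n] (M : Matrix n n ℂ) (μ : ℂ) :
    (Matrix.charpoly M).eval μ = (μ • (1 : Matrix n n ℂ) - M).det := by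
  have : (μ • (1 : Matrix n n ℂ) - M) = (charmatrix M).map (Polynomial.evalRingHom μ) := by
    ext i j
    by_cases h : i = j
    · subst h
      simp [charmatrix_apply_eq, Matrix.one_apply]
    · simp [charmatrix_apply_ne _ _ _ h, Matrix.one_apply_ne h]
  rw [Matrix.charpoly, this]
  have h2 : (Polynomial.evalRingHom μ) (charmatrix M).det
      = ((charmatrix M).map (Polynomial.evalRingHom μ)).det := by
    rw [RingHom.map_det]; rfl
  exact h2

lemma aux_abs_eq_one {N : ℕ} (U : Matrix.unitaryGroup (Fin N) ℂ) {μ : ℂ}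
    (hμ : μ ∈ eigenvalues N U) : ‖μ‖ = 1 := by
  have hroot : (Matrix.charpoly (U : Matrix (Fin N) (Fin N) ℂ)).IsRoot μ :=
    Polynomial.isRoot_of_mem_roots hμ
  have hdet : (μ • (1 : Matrix (Fin N) (Fin N) ℂ) - (U : Matrix (Fin N) (Fin N) ℂ)).det = 0 := by
    rw [← aux_eval_charpoly]; exact hroot
  obtain ⟨v, hv, hmul⟩ := (Matrix.exists_mulVec_eq_zero_iff).mpr hdet
  have hUv : (U : Matrix (Fin N) (Fin N) ℂ).mulVec v = μ • v := by
    have := hmul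
    rw [Matrix.sub_mulVec, Matrix.smul_mulVec, Matrix.one_mulVec, sub_eq_zero] at this
    exact this.symm
  have hstar : star (U : Matrix (Fin N) (Fin N) ℂ) * (U : Matrix (Fin N) (Fin N) ℂ) = 1 :=
    U.prop.1
  have key : star v ⬝ᵥ v = (starRingEnd ℂ μ * μ) * (star v ⬝ᵥ v) := by
    calc star v ⬝ᵥ v
        = star v ⬝ᵥ ((star (U : Matrix (Fin N) (Fin N) ℂ) *
            (U : Matrix (Fin N) (Fin N) ℂ)).mulVec v) := by
          rw [hstar, Matrix.one_mulVec]
      _ = star v ⬝ᵥ (star (U : Matrix (Fin N) (Fin N) ℂ)).mulVec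
            ((U : Matrix (Fin N) (Fin N) ℂ).mulVec v) := by rw [Matrix.mulVec_mulVec]
      _ = (star v ᵥ* star (U : Matrix (Fin N) (Fin N) ℂ)) ⬝ᵥ
            ((U : Matrix (Fin N) (Fin N) ℂ).mulVec v) := by
          rw [Matrix.dotProduct_mulVec]
      _ = star ((U : Matrix (Fin N) (Fin N) ℂ).mulVec v) ⬝ᵥ
            ((U : Matrix (Fin N) (Fin N) ℂ).mulVec v) := by
          rw [Matrix.star_mulVec, Matrix.star_eq_conjTranspose]
      _ = star (μ • v) ⬝ᵥ (μ • v) := by rw [hUv]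
      _ = (starRingEnd ℂ μ * μ) * (star v ⬝ᵥ v) := by
          rw [star_smul, smul_dotProduct, dotProduct_smul]
          simp [smul_smul, mul_comm]
          ring
  have hvv : star v ⬝ᵥ v ≠ 0 := fun h => hv (dotProduct_star_self_eq_zero.mp h)
  have hmu : starRingEnd ℂ μ * μ = 1 := by
    by_contra hne
    apply hvv
    have : (starRingEnd ℂ μ * μ - 1) * (star v ⬝ᵥ v) = 0 := by linear_combination -key
    rcases mul_eq_zero.mp this with h | h
    · exact absurd (by linear_combination h) hne
    · exact h
  have hnsq : Complex.normSq μ = 1 := by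
    have := hmu
    rw [mul_comm, Complex.mul_conj] at this
    exact_mod_cast this
  rw [Complex.norm_def, hnsq, Real.sqrt_one]

lemma aux_card {N : ℕ} (U : Matrix.unitaryGroup (Fin N) ℂ) :
    Multiset.card (eigenvalues N U) = N := by
  have hs : (Matrix.charpoly (U : Matrix (Fin N) (Fin N) ℂ)).Splits :=
    IsAlgClosed.splits _
  have := (Polynomial.splits_iff_card_roots).mp hs
  rw [eigenvalues, this, Matrix.charpoly_natDegree_eq_dim, Fintype.card_fin]

lemma aux_re_le_one {x : ℝ} (hx : 1 / 2 ≤ x) (hx1 : x ≤ 1) {lam : ℂ}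
    (h : ‖lam‖ = 1) : (((x : ℝ) : ℂ) - lam)⁻¹.re ≤ 1 := by
  have hnsq : lam.re ^ 2 + lam.im ^ 2 = 1 := by
    have : Complex.normSq lam = 1 := by
      rw [← Complex.sq_norm, h]; norm_num
    rw [Complex.normSq_apply] at this
    nlinarith [this]
  have hre : (((x : ℝ) : ℂ) - lam).re = x - lam.re := by simp
  have him : (((x : ℝ) : ℂ) - lam).im = -lam.im := by simp
  rw [Complex.inv_re, Complex.normSq_apply, hre, him]
  set d : ℝ := (x - lam.re) * (x - lam.re) + -lam.im * -lam.im with hd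
  have hdnn : 0 ≤ d := by nlinarith
  rcases eq_or_lt_of_le hdnn with hzero | hpos
  · rw [← hzero]; simp
  · rw [div_le_one hpos]
    have hcle : lam.re ≤ 1 := by nlinarith
    have hcge : -1 ≤ lam.re := by nlinarith
    nlinarith [sq_nonneg lam.im, mul_nonneg (sub_nonneg.mpr hx1) (by linarith : (0:ℝ) ≤ 2 - x),
      mul_nonneg (by linarith : (0:ℝ) ≤ 2 * x - 1) (by linarith : (0:ℝ) ≤ 1 - lam.re)]

set_option maxHeartbeats 800000 in
lemma aux_re_le_neg {N : ℕ} (hN : 2 ≤ N) {lam : ℂ} (h : ‖lam‖ = 1)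
    (harg : |Complex.arg lam| < 1 / N) :
    ((((1 - 1 / N : ℝ)) : ℂ) - lam)⁻¹.re ≤ -(3 * N / 8) := by
  have hNpos : (0 : ℝ) < N := by positivity
  have hN2 : (2 : ℝ) ≤ N := by exact_mod_cast hN
  set t : ℝ := 1 / N with ht
  have htpos : 0 < t := by positivity
  have ht2 : t ≤ 1 / 2 := by
    rw [ht, div_le_div_iff₀ hNpos (by norm_num)]; linarith
  have hlam0 : lam ≠ 0 := by
    intro h0; rw [h0] at h; simp at h
  set θ := Complex.arg lam with hθ
  have hcos : Real.cos θ = lam.re := by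
    rw [hθ, Complex.cos_arg hlam0, h, div_one]
  have hsin : Real.sin θ = lam.im := by
    rw [hθ, Complex.sin_arg, h, div_one]
  have hθt : |θ| < t := harg
  have hθsq : θ ^ 2 ≤ t ^ 2 := by
    rw [← _root_.sq_abs]; nlinarith [abs_nonneg θ]
  have hc_lb : 1 - θ ^ 2 / 2 ≤ lam.re := by
    rw [← hcos]; exact Real.one_sub_sq_div_two_le_cos
  have hc_ub : lam.re ≤ 1 := by
    rw [← hcos]; exact Real.cos_le_one θ
  have hs_sq : lam.im ^ 2 ≤ t ^ 2 := by
    rw [← hsin, ← _root_.sq_abs]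
    nlinarith [Real.abs_sin_le_abs (x := θ), abs_nonneg θ, abs_nonneg (Real.sin θ)]
  have hre : ((((1 - 1 / N : ℝ)) : ℂ) - lam).re = (1 - t) - lam.re := by simp [ht]
  have him : ((((1 - 1 / N : ℝ)) : ℂ) - lam).im = -lam.im := by simp
  have hre_ub : (1 - t) - lam.re ≤ -(3 * t / 4) := by nlinarith [mul_le_mul_of_nonneg_left ht2 htpos.le]
  have hre_lb : -t ≤ (1 - t) - lam.re := by nlinarith
  rw [Complex.inv_re, Complex.normSq_apply, hre, him]
  set d : ℝ := ((1 - t) - lam.re) * ((1 - t) - lam.re) + -lam.im * -lam.im with hd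
  have hdub : d ≤ 2 * t ^ 2 := by nlinarith
  have hdpos : 0 < d := by nlinarith
  rw [div_le_iff₀ hdpos]
  have hNt : (N : ℝ) = 1 / t := by rw [ht, one_div_one_div]
  calc (1 - t) - lam.re ≤ -(3 * t / 4) := hre_ub
    _ = -(3 * (1 / t) / 8) * (2 * t ^ 2) := by field_simp; ring
    _ ≤ -(3 * (N : ℝ) / 8) * d := by
        rw [hNt]
        have h38 : 0 < 3 * (1 / t) / 8 := by positivity
        nlinarith
  
end aux

/-- There is an absolute constant `C > 0` such that for every `N ≥ 2` and every
unitary `U`, the number of eigenvalue angles (counted with multiplicity) with `|θ_j| < 1/N`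
is at most `C (N + |(P'_U/P_U)(1 - 1/N)|)/N`. -/
theorem count_small_angles_bound :
    ∃ C : ℝ, 0 < C ∧
      ∀ (N : ℕ), 2 ≤ N → ∀ (U : Matrix.unitaryGroup (Fin N) ℂ),
        (((eigenvalues N U).filter (fun lam => |Complex.arg lam| < 1 / N)).card : ℝ)
          ≤ C * (N + ‖
              (((eigenvalues N U).map (fun lam => (((1 - 1 / N : ℝ) : ℂ) - lam)⁻¹)).sum)‖) / N := by
  refine ⟨3, by norm_num, fun N hN U => ?_⟩
  have hNpos : (0 : ℝ) < N := by positivity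
  have hN2 : (2 : ℝ) ≤ N := by exact_mod_cast hN
  set m : Multiset ℂ := eigenvalues N U with hm
  set p : ℂ → Prop := fun lam => |Complex.arg lam| < 1 / N with hp
  set f : ℂ → ℂ := fun lam => (((1 - 1 / N : ℝ) : ℂ) - lam)⁻¹ with hf
  set S : ℂ := ((m.map f).sum) with hS
  set k : ℕ := (m.filter p).card with hk
  -- the sum of real parts
  have hresum : S.re = ((m.map f).map Complex.re).sum := by
    rw [hS]
    simpa using map_multiset_sum Complex.reAddGroupHom (m.map f)
  -- split the multiset
  have hsplit : m = m.filter p + m.filter (fun lam => ¬ p lam) := (Multiset.filter_add_not p m).symm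
  have hcardm : Multiset.card m = N := aux_card U
  have habs1 : ∀ lam ∈ m, ‖lam‖ = 1 := fun lam hl => aux_abs_eq_one U hl
  -- bound on the filtered part
  have hbound1 : (((m.filter p).map f).map Complex.re).sum ≤ (k : ℝ) * (-(3 * N / 8)) := by
    have := Multiset.sum_le_card_nsmul (((m.filter p).map f).map Complex.re) (-(3 * (N : ℝ) / 8))
      (by
        intro x hx
        rw [Multiset.mem_map] at hx
        obtain ⟨z, hz, rfl⟩ := hx
        rw [Multiset.mem_map] at hz
        obtain ⟨lam, hlam, rfl⟩ := hz
        have hmem := Multiset.mem_of_mem_filter hlam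
        have hparg : p lam := Multiset.of_mem_filter hlam
        exact aux_re_le_neg hN (habs1 lam hmem) hparg)
    simpa [hk, mul_comm, nsmul_eq_mul] using this
  -- bound on the other part
  have hbound2 : (((m.filter (fun lam => ¬ p lam)).map f).map Complex.re).sum ≤ (N : ℝ) := by
    have hle : (((m.filter (fun lam => ¬ p lam)).map f).map Complex.re).sum
        ≤ Multiset.card ((((m.filter (fun lam => ¬ p lam)).map f).map Complex.re)) • (1 : ℝ) := by
      apply Multiset.sum_le_card_nsmul
      intro x hx
      rw [Multiset.mem_map] at hx
      obtain ⟨z, hz, rfl⟩ := hx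
      rw [Multiset.mem_map] at hz
      obtain ⟨lam, hlam, rfl⟩ := hz
      have hmem := Multiset.mem_of_mem_filter hlam
      have hx1 : (1 : ℝ) - 1 / N ≤ 1 := by
        have : 0 < 1 / (N : ℝ) := by positivity
        linarith
      have hx2 : (1 : ℝ) / 2 ≤ 1 - 1 / N := by
        have : 1 / (N : ℝ) ≤ 1 / 2 := by
          rw [div_le_div_iff₀ hNpos (by norm_num)]; linarith
        linarith
      exact aux_re_le_one hx2 hx1 (habs1 lam hmem)
    have hcf : (Multiset.card (m.filter (fun lam => ¬ p lam)) : ℝ) ≤ (N : ℝ) := by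
      have := Multiset.card_le_card (Multiset.filter_le (fun lam => ¬ p lam) m)
      rw [hcardm] at this
      exact_mod_cast this
    rw [Multiset.card_map, Multiset.card_map] at hle
    calc (((m.filter (fun lam => ¬ p lam)).map f).map Complex.re).sum
        ≤ Multiset.card (m.filter (fun lam => ¬ p lam)) • (1 : ℝ) := hle
      _ = (Multiset.card (m.filter (fun lam => ¬ p lam)) : ℝ) := by simp
      _ ≤ (N : ℝ) := hcf
  -- combine
  have hresum2 : S.re ≤ (k : ℝ) * (-(3 * N / 8)) + (N : ℝ) := by
    rw [hresum]
    conv_lhs => rw [hsplit]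
    rw [Multiset.map_add, Multiset.map_add, Multiset.sum_add]
    exact add_le_add hbound1 hbound2
  have habsS : -(‖S‖) ≤ S.re := by
    have := Complex.abs_re_le_norm S
    rw [abs_le] at this
    linarith [this.1]
  have hkey : (k : ℝ) * (3 * N / 8) ≤ (N : ℝ) + ‖S‖ := by nlinarith
  have hknn : (0 : ℝ) ≤ (k : ℝ) := Nat.cast_nonneg k
  have hSnn : (0 : ℝ) ≤ ‖S‖ := norm_nonneg S
  rw [le_div_iff₀ hNpos]
  nlinarith [hkey, hSnn, hknn, hN2]
end

section
/- There exists an absolute constant C > 0 such that for all u, v ∈ ℝ, every positive integer N, and every real L with 1 ≤ L ≤ N/2, with F = u·g + v·h as above, one has ∑_{k ∈ ℤ, |k| > N/2} |k| |F̂(k)|² ≤ C · (u² + v²) · L · e^{−L}. In particular, if L = L_N satisfies L_N → ∞ and L_N/N → 0 as N → ∞, then ∑_{|k| > N/2} |k| |F̂(k)|² → 0. -/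
open Filter
open scoped Classical

/-- The function `f(θ) = (L/N) · 1/((1 - L/N) - e^{iθ})`. -/
noncomputable def fFun (N : ℕ) (L : ℝ) (θ : ℝ) : ℂ :=
  ((L / N : ℝ) : ℂ) * (((1 - L / N : ℝ) : ℂ) - Complex.exp (Complex.I * θ))⁻¹

/-- The real-valued function `F = u·g + v·h`, where `g = Re f` and `h = Im f`. -/
noncomputable def FFun (N : ℕ) (L u v : ℝ) (θ : ℝ) : ℝ :=
  u * (fFun N L θ).re + v * (fFun N L θ).im

/-- The `k`-th Fourier coefficient `(1/2π) ∫₀^{2π} F(θ) e^{-ikθ} dθ` of `F`. -/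
noncomputable def Fhat (N : ℕ) (L u v : ℝ) (k : ℤ) : ℂ :=
  (1 / (2 * Real.pi) : ℂ) *
    ∫ θ in (0 : ℝ)..(2 * Real.pi), (FFun N L u v θ : ℂ) * Complex.exp (-(Complex.I * k * θ))

/-- The tail sum `∑_{k ∈ ℤ, |k| > N/2} |k| |F̂(k)|²`. -/
noncomputable def tailSum (N : ℕ) (L u v : ℝ) : ℝ :=
  ∑' k : ℤ, if (N : ℝ) / 2 < |(k : ℝ)| then |(k : ℝ)| * ‖Fhat N L u v k‖ ^ 2 else 0

open intervalIntegral MeasureTheory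

lemma int_exp (m : ℤ) : (∫ θ in (0:ℝ)..(2*Real.pi), Complex.exp (Complex.I * m * θ))
    = if m = 0 then (2*Real.pi : ℂ) else 0 := by
  rcases eq_or_ne m 0 with hm | hm
  · simp [hm]
  · rw [if_neg hm]
    have hc : (Complex.I * m : ℂ) ≠ 0 := by
      simp [Complex.I_ne_zero, Complex.ext_iff]
      exact_mod_cast hm
    have := integral_exp_mul_complex (a := 0) (b := 2*Real.pi) hc
    simp only [mul_assoc] at this ⊢
    rw [this]
    have h1 : Complex.I * ((m : ℂ) * ((2:ℝ)*Real.pi : ℝ)) = (m : ℂ) * (2 * Real.pi * Complex.I) := by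
      push_cast; ring
    rw [h1, Complex.exp_int_mul_two_pi_mul_I]
    simp

lemma hasSum_inv_gen {a : ℝ} (ha0 : 0 ≤ a) (ha : a < 1) {z : ℂ} (hz : ‖z‖ = 1) :
    HasSum (fun n : ℕ => -((a:ℂ)^n * (z⁻¹)^(n+1))) (((a:ℂ) - z)⁻¹) := by
  have hz0 : z ≠ 0 := by intro h; rw [h] at hz; simp at hz
  have hw : ‖(a:ℂ) * z⁻¹‖ < 1 := by
    rw [norm_mul, norm_inv, hz, inv_one, mul_one, Complex.norm_real]
    rwa [Real.norm_of_nonneg ha0]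
  have h := (hasSum_geometric_of_norm_lt_one hw).mul_left (-z⁻¹)
  have h2 : (1:ℂ) - (a:ℂ)*z⁻¹ = (z - (a:ℂ)) * z⁻¹ := by
    field_simp
  have heq : -z⁻¹ * (1 - (a:ℂ) * z⁻¹)⁻¹ = ((a:ℂ) - z)⁻¹ := by
    rw [h2, mul_inv, inv_inv]
    calc -z⁻¹ * ((z-(a:ℂ))⁻¹ * z) = -((z-(a:ℂ))⁻¹ * (z⁻¹ * z)) := by ring
    _ = -(z-(a:ℂ))⁻¹ := by rw [inv_mul_cancel₀ hz0, mul_one]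
    _ = ((a:ℂ) - z)⁻¹ := by rw [← inv_neg, neg_sub]
  rw [heq] at h
  convert h using 2 with n
  · rfl
  rw [mul_pow, pow_succ]
  ring

lemma integral_inv_mul {a : ℝ} (ha0 : 0 ≤ a) (ha : a < 1) (ε k : ℤ) (hε : ε = 1 ∨ ε = -1) :
    (∫ θ in (0:ℝ)..(2*Real.pi),
        ((a:ℂ) - Complex.exp (Complex.I * ε * θ))⁻¹ * Complex.exp (-(Complex.I * k * θ)))
    = if ε * k < 0 then (-(2*Real.pi) * (a:ℂ)^((-(ε*k)-1).toNat)) else 0 := by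
  have hpi : (0:ℝ) ≤ 2*Real.pi := by positivity
  set F : ℕ → ℝ → ℂ :=
    fun n θ => -((a:ℂ)^n * Complex.exp (Complex.I * ((-(ε*(n+1)) - k : ℤ)) * θ)) with hF
  -- pointwise sum
  have hpt : ∀ θ : ℝ, HasSum (fun n => F n θ)
      (((a:ℂ) - Complex.exp (Complex.I * ε * θ))⁻¹ * Complex.exp (-(Complex.I * k * θ))) := by
    intro θ
    have hz : ‖Complex.exp (Complex.I * ε * θ)‖ = 1 := by
      rw [Complex.norm_exp]
      simp [Complex.mul_re]
    have h := (hasSum_inv_gen ha0 ha hz).mul_right (Complex.exp (-(Complex.I * k * θ)))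
    convert h using 2 with n
    · rfl
    rw [hF]
    simp only
    rw [← Complex.exp_neg, ← Complex.exp_nat_mul]
    rw [show (-(↑a^n * Complex.exp ((n+1:ℕ) * -(Complex.I * ε * θ))) * Complex.exp (-(Complex.I * k * θ)))
        = -(↑a^n * (Complex.exp ((n+1:ℕ) * -(Complex.I * ε * θ)) * Complex.exp (-(Complex.I * k * θ)))) from by ring,
      ← Complex.exp_add]
    congr 2
    push_cast
    ring
  -- integrability of each term
  have hcont : ∀ n : ℕ, Continuous (F n) := by
    intro n
    apply Continuous.neg
    apply continuous_const.mul
    exact Complex.continuous_exp.comp (by continuity)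
  have hint : ∀ n : ℕ, IntegrableOn (F n) (Set.Ioc 0 (2*Real.pi)) volume :=
    fun n => (hcont n).integrableOn_Ioc
  -- norms
  have hnorm : ∀ n : ℕ, ∀ θ : ℝ, ‖F n θ‖ = a^n := by
    intro n θ
    rw [hF]
    simp only [norm_neg, norm_mul, Complex.norm_exp]
    rw [norm_pow]
    simp [Complex.mul_re, Complex.norm_of_nonneg ha0, abs_of_nonneg ha0]
  have hsum : Summable fun n : ℕ => ∫ θ in Set.Ioc 0 (2*Real.pi), ‖F n θ‖ := by
    have : (fun n : ℕ => ∫ θ in Set.Ioc 0 (2*Real.pi), ‖F n θ‖)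
        = fun n => (2*Real.pi) * a^n := by
      funext n
      simp only [hnorm]
      rw [setIntegral_const]
      simp [Real.volume_Ioc, max_eq_left hpi, ENNReal.toReal_ofReal hpi]
    rw [this]
    exact (summable_geometric_of_lt_one ha0 ha).mul_left _
  -- interchange
  rw [intervalIntegral.integral_of_le hpi]
  rw [show (∫ θ in Set.Ioc 0 (2*Real.pi),
      ((a:ℂ) - Complex.exp (Complex.I * ε * θ))⁻¹ * Complex.exp (-(Complex.I * k * θ)))
      = ∫ θ in Set.Ioc 0 (2*Real.pi), ∑' n, F n θ from
    setIntegral_congr_fun (by measurability) (fun θ _ => ((hpt θ).tsum_eq).symm)]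
  rw [← integral_tsum_of_summable_integral_norm hint hsum]
  -- compute each integral
  have hterm : ∀ n : ℕ, (∫ θ in Set.Ioc 0 (2*Real.pi), F n θ)
      = -((a:ℂ)^n) * (if (-(ε*(n+1)) - k : ℤ) = 0 then (2*Real.pi : ℂ) else 0) := by
    intro n
    rw [← intervalIntegral.integral_of_le hpi]
    rw [hF]
    simp only
    rw [intervalIntegral.integral_neg, intervalIntegral.integral_const_mul, int_exp]
    ring
  calc (∑' n, ∫ θ in Set.Ioc 0 (2*Real.pi), F n θ)
      = ∑' n : ℕ, (-((a:ℂ)^n) * (if (-(ε*(n+1)) - k : ℤ) = 0 then (2*Real.pi : ℂ) else 0)) := by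
        exact tsum_congr hterm
    _ = if ε * k < 0 then (-(2*Real.pi) * (a:ℂ)^((-(ε*k)-1).toNat)) else 0 := by
        by_cases hk : ε * k < 0
        · rw [if_pos hk]
          set n0 : ℕ := ((-(ε*k)-1).toNat) with hn0def
          have hn0 : (n0 : ℤ) = -(ε*k)-1 := Int.toNat_of_nonneg (by omega)
          have : (fun n : ℕ => (-((a:ℂ)^n) * (if (-(ε*(n+1)) - k : ℤ) = 0 then (2*Real.pi : ℂ) else 0)))
              = fun n : ℕ => if n = n0 then (-((a:ℂ)^n0) * (2*Real.pi : ℂ)) else 0 := by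
            funext n
            by_cases hn : n = n0
            · rw [hn]
              have hc : (-(ε*((n0:ℤ)+1)) - k) = 0 := by
                rcases hε with h | h <;> subst h <;> omega
              rw [if_pos hc, if_pos rfl]
            · have hc : ¬ ((-(ε*((n:ℤ)+1)) - k) = 0) := by
                intro h0
                apply hn
                have : (n : ℤ) = (n0 : ℤ) := by
                  rw [hn0]
                  rcases hε with h | h <;> subst h <;> omega
                exact_mod_cast this
              rw [if_neg hc, if_neg hn, mul_zero]
          rw [this, tsum_ite_eq]
          ring
        · rw [if_neg hk]
          have : (fun n : ℕ => (-((a:ℂ)^n) * (if (-(ε*(n+1)) - k : ℤ) = 0 then (2*Real.pi : ℂ) else 0)))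
              = fun n : ℕ => 0 := by
            funext n
            have hc : ¬ ((-(ε*((n:ℤ)+1)) - k) = 0) := by
              intro h0
              rcases hε with h | h <;> subst h <;> omega
            rw [if_neg hc, mul_zero]
          rw [this, tsum_zero]

lemma decomp (u v : ℝ) (z : ℂ) :
    ((u * z.re + v * z.im : ℝ) : ℂ)
      = ((u:ℂ) - Complex.I*v)/2 * z + ((u:ℂ) + Complex.I*v)/2 * (starRingEnd ℂ) z := by
  apply Complex.ext <;>
    simp [Complex.add_re, Complex.add_im, Complex.mul_re, Complex.mul_im, Complex.div_re,
      Complex.div_im, Complex.normSq_apply] <;> ring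

lemma conj_exp_I (θ : ℝ) :
    (starRingEnd ℂ) (Complex.exp (Complex.I * θ)) = Complex.exp (Complex.I * ((-1 : ℤ)) * θ) := by
  rw [← Complex.exp_conj, map_mul, Complex.conj_I, Complex.conj_ofReal]
  push_cast; ring_nf

lemma Fhat_eq (N : ℕ) (L u v : ℝ) (hN : 0 < N) (hL1 : 1 ≤ L) (hL2 : L ≤ N / 2)
    (k : ℤ) (hk : k ≠ 0) :
    Fhat N L u v k = -(((L/N : ℝ) : ℂ)) * (((1 - L/N : ℝ)^(k.natAbs - 1) : ℝ) : ℂ)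
      * (if k < 0 then ((u:ℂ) - Complex.I*v)/2 else ((u:ℂ) + Complex.I*v)/2) := by
  have hNR : (0:ℝ) < N := by exact_mod_cast hN
  have hLN : L / N ≤ 1 := by
    rw [div_le_one hNR]; nlinarith
  have ha0 : (0:ℝ) ≤ 1 - L/N := by linarith
  have ha1 : (1:ℝ) - L/N < 1 := by
    have : 0 < L / N := div_pos (by linarith) hNR
    linarith
  set a : ℝ := 1 - L/N with hadef
  set r : ℝ := L/N with hrdef
  -- integrand decomposition
  have hden : ∀ (ε : ℤ) (θ : ℝ), ((a:ℂ) - Complex.exp (Complex.I * ε * θ)) ≠ 0 := by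
    intro ε θ h
    have h2 : (a:ℂ) = Complex.exp (Complex.I * ε * θ) := by linear_combination h
    have h3 : ‖(a:ℂ)‖ = 1 := by
      rw [h2, Complex.norm_exp]; simp [Complex.mul_re]
    rw [Complex.norm_real, Real.norm_of_nonneg ha0] at h3
    linarith
  have hcont : ∀ ε : ℤ, Continuous (fun θ : ℝ =>
      ((a:ℂ) - Complex.exp (Complex.I * ε * θ))⁻¹ * Complex.exp (-(Complex.I * k * θ))) := by
    intro ε
    apply Continuous.mul
    · exact Continuous.inv₀ (continuous_const.sub (Complex.continuous_exp.comp (by continuity)))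
        (fun θ => hden ε θ)
    · exact Complex.continuous_exp.comp (by continuity)
  have hrw : ∀ θ : ℝ, ((FFun N L u v θ : ℝ) : ℂ) * Complex.exp (-(Complex.I * k * θ))
      = (((u:ℂ) - Complex.I*v)/2 * r) *
          (((a:ℂ) - Complex.exp (Complex.I * (1:ℤ) * θ))⁻¹ * Complex.exp (-(Complex.I * k * θ)))
        + (((u:ℂ) + Complex.I*v)/2 * r) *
          (((a:ℂ) - Complex.exp (Complex.I * (-1:ℤ) * θ))⁻¹ * Complex.exp (-(Complex.I * k * θ))) := by
    intro θ
    rw [FFun, decomp u v (fFun N L θ)]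
    rw [show fFun N L θ = (r:ℂ) * (((a:ℂ)) - Complex.exp (Complex.I * θ))⁻¹ from rfl]
    rw [map_mul, map_inv₀, map_sub, Complex.conj_ofReal, Complex.conj_ofReal, conj_exp_I]
    push_cast
    ring_nf
  rw [Fhat, intervalIntegral.integral_congr (g :=
      fun θ => (((u:ℂ) - Complex.I*v)/2 * r) *
          (((a:ℂ) - Complex.exp (Complex.I * (1:ℤ) * θ))⁻¹ * Complex.exp (-(Complex.I * k * θ)))
        + (((u:ℂ) + Complex.I*v)/2 * r) *
          (((a:ℂ) - Complex.exp (Complex.I * (-1:ℤ) * θ))⁻¹ * Complex.exp (-(Complex.I * k * θ))))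
      (fun θ _ => hrw θ)]
  rw [intervalIntegral.integral_add
      (f := fun θ => (((u:ℂ) - Complex.I*v)/2 * r) *
            (((a:ℂ) - Complex.exp (Complex.I * (1:ℤ) * θ))⁻¹ * Complex.exp (-(Complex.I * k * θ))))
      (g := fun θ => (((u:ℂ) + Complex.I*v)/2 * r) *
            (((a:ℂ) - Complex.exp (Complex.I * (-1:ℤ) * θ))⁻¹ * Complex.exp (-(Complex.I * k * θ))))
      ((continuous_const.mul (hcont 1)).intervalIntegrable _ _)
      ((continuous_const.mul (hcont (-1))).intervalIntegrable _ _),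
    intervalIntegral.integral_const_mul, intervalIntegral.integral_const_mul,
    integral_inv_mul ha0 ha1 1 k (Or.inl rfl),
    integral_inv_mul ha0 ha1 (-1) k (Or.inr rfl)]
  have hpi : (Real.pi : ℝ) ≠ 0 := Real.pi_ne_zero
  rcases lt_or_gt_of_ne hk with hneg | hpos
  · rw [if_pos (by omega : (1:ℤ)*k < 0), if_neg (by omega : ¬ ((-1:ℤ)*k < 0)), if_pos hneg]
    have hexp : ((-(1*k)-1).toNat) = k.natAbs - 1 := by omega
    rw [hexp]
    have hpiC : (Real.pi : ℂ) ≠ 0 := Complex.ofReal_ne_zero.mpr hpi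
    push_cast
    field_simp [hpiC]
    ring
  · rw [if_neg (by omega : ¬ ((1:ℤ)*k < 0)), if_pos (by omega : ((-1:ℤ)*k < 0)),
      if_neg (by omega : ¬ (k < 0))]
    have hexp : ((-(-1*k)-1).toNat) = k.natAbs - 1 := by omega
    rw [hexp]
    have hpiC : (Real.pi : ℂ) ≠ 0 := Complex.ofReal_ne_zero.mpr hpi
    push_cast
    field_simp [hpiC]
    ring

lemma Fhat_abs (N : ℕ) (L u v : ℝ) (hN : 0 < N) (hL1 : 1 ≤ L) (hL2 : L ≤ N / 2)
    (k : ℤ) (hk : k ≠ 0) :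
    ‖Fhat N L u v k‖
      = (L/N)/2 * (1 - L/N)^(k.natAbs - 1) * Real.sqrt (u^2+v^2) := by
  have hNR : (0:ℝ) < N := by exact_mod_cast hN
  have hr0 : (0:ℝ) ≤ L/N := by positivity
  have ha0 : (0:ℝ) ≤ 1 - L/N := by
    have : L / N ≤ 1 := by rw [div_le_one hNR]; nlinarith
    linarith
  rw [Fhat_eq N L u v hN hL1 hL2 k hk]
  rw [norm_mul, norm_mul]
  rw [show -(((L/N : ℝ) : ℂ)) = ((-(L/N) : ℝ) : ℂ) by push_cast; ring]
  rw [Complex.norm_real, Complex.norm_real, Real.norm_eq_abs, Real.norm_eq_abs, abs_neg, abs_of_nonneg hr0,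
    abs_of_nonneg (pow_nonneg ha0 _)]
  have habs : ‖(if k < 0 then ((u:ℂ) - Complex.I*v)/2 else ((u:ℂ) + Complex.I*v)/2)‖
      = Real.sqrt (u^2+v^2) / 2 := by
    split_ifs <;>
    · rw [norm_div, Complex.norm_two, Complex.norm_def, Complex.normSq_apply]
      congr 2 <;> simp <;> ring
  rw [habs]
  ring

set_option maxHeartbeats 2000000 in
lemma key_bound (u v : ℝ) (N : ℕ) (hN : 0 < N) (L : ℝ) (hL1 : 1 ≤ L) (hL2 : L ≤ N / 2) :
    Summable (fun k : ℤ =>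
      if (N : ℝ) / 2 < |(k : ℝ)| then |(k : ℝ)| * ‖Fhat N L u v k‖ ^ 2 else 0)
    ∧ (∑' k : ℤ, if (N : ℝ) / 2 < |(k : ℝ)| then |(k : ℝ)| * ‖Fhat N L u v k‖ ^ 2 else 0)
        ≤ 2 * (u ^ 2 + v ^ 2) * L * Real.exp (-L) := by
  have hNR : (0:ℝ) < N := by exact_mod_cast hN
  have hN2 : 2 ≤ N := by
    have h2 : (2:ℝ) ≤ N := by linarith
    exact_mod_cast h2
  obtain ⟨S, hSdef⟩ : ∃ x : ℝ, x = u^2 + v^2 := ⟨_, rfl⟩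
  have hS0 : 0 ≤ S := by rw [hSdef]; positivity
  obtain ⟨r, hrdef⟩ : ∃ x : ℝ, x = L/N := ⟨_, rfl⟩
  have hr0 : 0 < r := by rw [hrdef]; positivity
  have hrhalf : r ≤ 1/2 := by
    rw [hrdef, div_le_div_iff₀ hNR (by norm_num)]; linarith
  obtain ⟨a, hadef⟩ : ∃ x : ℝ, x = 1 - L/N := ⟨_, rfl⟩
  have ha0 : (0:ℝ) ≤ a := by rw [hadef]; linarith [hrhalf]
  have hahalf : (1:ℝ)/2 ≤ a := by rw [hadef]; linarith [hrhalf]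
  have ha1 : a < 1 := by rw [hadef]; linarith [hr0]
  obtain ⟨q, hqdef⟩ : ∃ x : ℝ, x = a^2 := ⟨_, rfl⟩
  have hq0 : 0 ≤ q := by rw [hqdef]; positivity
  have hq1 : q < 1 := by
    rw [hqdef]; nlinarith [ha0, ha1]
  have hqpos : 0 < q := by
    have ha : (0:ℝ) < a := lt_of_lt_of_le (by norm_num) hahalf
    rw [hqdef]; positivity
  obtain ⟨c, hcdef⟩ : ∃ x : ℝ, x = S * r^2 / 4 := ⟨_, rfl⟩
  have hc0 : 0 ≤ c := by rw [hcdef, hSdef]; positivity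
  obtain ⟨T, hTdef⟩ : ∃ f : ℕ → ℝ, f = fun n : ℕ => if (N:ℝ)/2 < (n:ℝ) then (n:ℝ) * (c * q^(n-1)) else 0 := ⟨_, rfl⟩
  -- each ℤ-term equals T of natAbs
  have hterm : ∀ k : ℤ,
      (if (N : ℝ) / 2 < |(k : ℝ)| then |(k : ℝ)| * ‖Fhat N L u v k‖ ^ 2 else 0)
      = T k.natAbs := by
    intro k
    have habs : |(k:ℝ)| = (k.natAbs : ℝ) := by
      rw [Nat.cast_natAbs]; push_cast; rfl
    rw [hTdef]
    simp only [habs]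
    by_cases hcond : (N:ℝ)/2 < (k.natAbs : ℝ)
    · rw [if_pos hcond, if_pos hcond]
      have hk : k ≠ 0 := by
        intro h; rw [h] at hcond; simp at hcond; linarith
      rw [Fhat_abs N L u v hN hL1 hL2 k hk]
      rw [mul_pow, mul_pow, Real.sq_sqrt (show (0:ℝ) ≤ u^2+v^2 by positivity),
        ← hSdef, ← pow_mul, ← hadef, ← hrdef]
      have hpow : a^((k.natAbs-1)*2) = q^(k.natAbs-1) := by
        rw [hqdef, ← pow_mul, mul_comm]
      rw [hpow, hcdef]
      ring
    · rw [if_neg hcond, if_neg hcond]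
  -- summability of T
  have hq1' : ‖q‖ < 1 := by rwa [Real.norm_of_nonneg hq0]
  have hnatgeom : Summable (fun n : ℕ => (n:ℝ) * q^n) := by
    have h := summable_pow_mul_geometric_of_norm_lt_one 1 hq1'
    simpa using h
  have hmaj : Summable (fun n : ℕ => (c/q) * ((n:ℝ) * q^n)) := hnatgeom.mul_left _
  have hTnonneg : ∀ n, 0 ≤ T n := by
    intro n; rw [hTdef]; dsimp only; split_ifs
    · apply mul_nonneg (Nat.cast_nonneg n) (mul_nonneg hc0 (pow_nonneg hq0 _))
    · exact le_rfl
  have hTle : ∀ n, T n ≤ (c/q) * ((n:ℝ) * q^n) := by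
    intro n; rw [hTdef]; dsimp only
    split_ifs with h
    · rcases Nat.eq_zero_or_pos n with h0 | h0
      · exfalso; rw [h0] at h; simp at h; linarith
      · have hqq : q^(n-1) = q^n / q := by
          rw [eq_div_iff (ne_of_gt hqpos), ← pow_succ]
          congr 1; omega
        rw [hqq]
        apply le_of_eq
        field_simp
    · apply mul_nonneg (div_nonneg hc0 hq0) (mul_nonneg (Nat.cast_nonneg n) (pow_nonneg hq0 _))
  have hTsum : Summable T := Summable.of_nonneg_of_le hTnonneg hTle hmaj
  -- ℤ summability
  have hfun : (fun k : ℤ =>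
      if (N : ℝ) / 2 < |(k : ℝ)| then |(k : ℝ)| * ‖Fhat N L u v k‖ ^ 2 else 0)
      = fun k : ℤ => T k.natAbs := funext hterm
  have e1 : (fun n : ℕ => T ((n:ℤ)).natAbs) = T := by funext n; simp
  have e2 : (fun n : ℕ => T ((-(n+1):ℤ)).natAbs) = fun n => T (n+1) := by
    funext n
    congr 1
  have hs2 : Summable (fun n : ℕ => T (n+1)) := (summable_nat_add_iff 1).mpr hTsum
  have hsummZ : Summable (fun k : ℤ => T k.natAbs) := by
    apply Summable.of_nat_of_neg_add_one
    · rw [e1]; exact hTsum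
    · rw [show (fun n : ℕ => T ((-((n:ℤ)+1)).natAbs)) = fun n : ℕ => T ((-(n+1):ℤ)).natAbs from by push_cast; rfl, e2]
      exact hs2
  refine ⟨by rw [hfun]; exact hsummZ, ?_⟩
  -- compute/bound the sum
  have hT0 : T 0 = 0 := by rw [hTdef]; dsimp only; split_ifs <;> simp
  have htail_eq : (∑' k : ℤ, if (N : ℝ) / 2 < |(k : ℝ)| then
        |(k : ℝ)| * ‖Fhat N L u v k‖ ^ 2 else 0) ≤ 2 * ∑' n, T n := by
    rw [hfun]
    rw [tsum_of_nat_of_neg_add_one (by rw [e1]; exact hTsum)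
      (by rw [show (fun n : ℕ => T ((-((n:ℤ)+1)).natAbs)) = fun n : ℕ => T ((-(n+1):ℤ)).natAbs from by push_cast; rfl, e2]; exact hs2)]
    rw [e1, show (fun n : ℕ => T ((-((n:ℤ)+1)).natAbs)) = fun n : ℕ => T ((-(n+1):ℤ)).natAbs from by push_cast; rfl, e2]
    have hshift1 : ∑' n : ℕ, T (n+1) = ∑' n, T n := by
      have := Summable.sum_add_tsum_nat_add 1 hTsum
      rw [Finset.sum_range_one, hT0, zero_add] at this
      exact this
    rw [hshift1]
    have hpos : 0 ≤ ∑' n, T n := tsum_nonneg hTnonneg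
    linarith
  refine le_trans htail_eq ?_
  -- now bound ∑' T
  obtain ⟨m1, hm1def⟩ : ∃ m : ℕ, m = N/2 + 1 := ⟨_, rfl⟩
  have hm1N : (m1:ℝ) ≤ N := by
    have : m1 ≤ N := by omega
    exact_mod_cast this
  have hm1pos : (0:ℝ) < m1 := by rw [hm1def]; positivity
  have hcond2 : ∀ n : ℕ, ((N:ℝ)/2 < n) ↔ m1 ≤ n := by
    intro n
    rw [div_lt_iff₀ (by norm_num : (0:ℝ) < 2),
      show ((n:ℝ)*2) = ((n*2 : ℕ):ℝ) from by push_cast; ring, Nat.cast_lt]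
    omega
  have hzero : ∑ i ∈ Finset.range m1, T i = 0 := by
    apply Finset.sum_eq_zero
    intro i hi
    rw [hTdef]; dsimp only
    rw [if_neg]
    rw [hcond2]
    have := Finset.mem_range.mp hi
    omega
  have hshift : ∀ j : ℕ, T (j + m1)
      = c*q^(m1-1) * ((j:ℝ)*q^j) + (c*q^(m1-1)*(m1:ℝ)) * q^j := by
    intro j
    rw [hTdef]; dsimp only
    rw [if_pos (by rw [hcond2]; omega)]
    have harg : (j + m1) - 1 = (m1-1) + j := by omega
    rw [harg, pow_add]
    push_cast
    ring
  have hs_a : Summable (fun j : ℕ => c*q^(m1-1) * ((j:ℝ)*q^j)) := hnatgeom.mul_left _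
  have hs_b : Summable (fun j : ℕ => (c*q^(m1-1)*(m1:ℝ)) * q^j) :=
    (summable_geometric_of_lt_one hq0 hq1).mul_left _
  have hTsum_eq : ∑' n, T n
      = c*q^(m1-1) * (q/(1-q)^2) + (c*q^(m1-1)*(m1:ℝ)) * (1-q)⁻¹ := by
    rw [← Summable.sum_add_tsum_nat_add m1 hTsum, hzero, zero_add]
    rw [tsum_congr hshift, Summable.tsum_add hs_a hs_b, tsum_mul_left, tsum_mul_left,
      tsum_coe_mul_geometric_of_norm_lt_one hq1', tsum_geometric_of_lt_one hq0 hq1]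
  -- numeric bounds
  have h1q : r ≤ 1 - q := by
    rw [hqdef, hadef, hrdef]
    have hr1 : L / N ≤ 1/2 := by rw [hrdef] at hrhalf; exact hrhalf
    nlinarith [hr0]
  have h1qpos : (0:ℝ) < 1 - q := by nlinarith [hr0, h1q]
  have hBL : (0:ℝ) < N/L := by
    apply div_pos hNR (by linarith)
  have hinv : (1-q)⁻¹ ≤ N/L := by
    have h6 : r⁻¹ = N/L := by rw [hrdef, inv_div]
    calc (1-q)⁻¹ ≤ r⁻¹ := by
          apply inv_anti₀ hr0 h1q
    _ = N/L := h6
  have h3 : (1:ℝ) ≤ (N/L)*(1-q) := by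
    calc (1:ℝ) = (N/L)*r := by rw [hrdef]; field_simp
    _ ≤ (N/L)*(1-q) := by apply mul_le_mul_of_nonneg_left h1q (le_of_lt hBL)
  have hfrac : q/(1-q)^2 ≤ (N/L)^2 := by
    rw [div_le_iff₀ (pow_pos h1qpos 2)]
    have h4 : (1:ℝ)*1 ≤ ((N/L)*(1-q))*((N/L)*(1-q)) :=
      mul_le_mul h3 h3 zero_le_one (le_trans zero_le_one h3)
    calc q ≤ 1 := hq1.le
    _ ≤ ((N/L)*(1-q))*((N/L)*(1-q)) := by linarith
    _ = (N/L)^2*(1-q)^2 := by ring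
  have hqm0 : (0:ℝ) ≤ q^(m1-1) := by positivity
  have hbound1 : ∑' n, T n ≤ q^(m1-1) * (S/4 + S*L/4) := by
    rw [hTsum_eq]
    have t1 : c*q^(m1-1) * (q/(1-q)^2) ≤ c*q^(m1-1) * (N/L)^2 :=
      mul_le_mul_of_nonneg_left hfrac (by apply mul_nonneg hc0 hqm0)
    have t2 : (c*q^(m1-1)*(m1:ℝ)) * (1-q)⁻¹ ≤ (c*q^(m1-1)*(N:ℝ)) * (N/L) := by
      apply mul_le_mul (by apply mul_le_mul_of_nonneg_left hm1N (mul_nonneg hc0 hqm0)) hinv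
        (by positivity) (by apply mul_nonneg (mul_nonneg hc0 hqm0) (le_of_lt hNR))
    have hcN2 : c * (N/L)^2 = S/4 * (L/N)^2 * (N/L)^2 := by rw [hcdef, hrdef]; ring
    have hid : (L/N)^2 * (N/L)^2 = 1 := by field_simp
    have hcN2' : c * (N/L)^2 = S/4 := by rw [hcN2, mul_assoc, hid, mul_one]
    have hcNL : c * (N:ℝ) * (N/L) = S*L/4 := by
      rw [hcdef, hrdef]; field_simp
    calc c*q^(m1-1) * (q/(1-q)^2) + (c*q^(m1-1)*(m1:ℝ)) * (1-q)⁻¹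
        ≤ c*q^(m1-1) * (N/L)^2 + (c*q^(m1-1)*(N:ℝ)) * (N/L) := by linarith
    _ = q^(m1-1) * (c * (N/L)^2) + q^(m1-1) * (c * (N:ℝ) * (N/L)) := by ring
    _ = q^(m1-1) * (S/4 + S*L/4) := by rw [hcN2', hcNL]; ring
  -- exponential bound on q^(m1-1)
  have hqm : q^(m1-1) ≤ 2 * Real.exp (-L) := by
    have hm1sub : m1 - 1 = N/2 := by omega
    have hq_eq : q^(m1-1) = a^(2*(N/2)) := by
      rw [hm1sub, hqdef, ← pow_mul]
    have hexp1 : a^(2*(N/2)) ≤ a^(N-1) :=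
      pow_le_pow_of_le_one ha0 ha1.le (by omega)
    have hexp2 : a^(N-1) ≤ 2 * a^N := by
      have hmm : a^(N-1) * (1/2) ≤ a^(N-1) * a :=
        mul_le_mul_of_nonneg_left hahalf (pow_nonneg ha0 _)
      have hpow : a^(N-1) * a = a^N := by
        rw [← pow_succ]; congr 1; omega
      linarith
    have hexp3 : a^N ≤ Real.exp (-L) := by
      have h5 : a ≤ Real.exp (-(L/N)) := by
        have := Real.add_one_le_exp (-(L/N))
        rw [hadef]; linarith
      calc a^N ≤ (Real.exp (-(L/N)))^N := pow_le_pow_left₀ ha0 h5 N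
      _ = Real.exp ((N:ℝ) * (-(L/N))) := by rw [← Real.exp_nat_mul]
      _ = Real.exp (-L) := by congr 1; field_simp
    rw [hq_eq]
    linarith
  -- final assembly
  have hSL : (0:ℝ) ≤ S/4 + S*L/4 := by nlinarith [hS0, hL1]
  calc 2 * ∑' n, T n ≤ 2 * (q^(m1-1) * (S/4 + S*L/4)) := by linarith
  _ ≤ 2 * ((2 * Real.exp (-L)) * (S/4 + S*L/4)) := by
      apply mul_le_mul_of_nonneg_left (mul_le_mul_of_nonneg_right hqm hSL) (by norm_num)
  _ = Real.exp (-L) * (S + S*L) := by ring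
  _ ≤ Real.exp (-L) * (2*S*L) := by
      have : S + S*L ≤ 2*S*L := by nlinarith [hS0, hL1]
      apply mul_le_mul_of_nonneg_left this (Real.exp_nonneg _)
  _ = 2 * (u ^ 2 + v ^ 2) * L * Real.exp (-L) := by rw [hSdef]; ring

/-- There is an absolute `C > 0` such that for all `u, v`, all `N ≥ 1` and all
`1 ≤ L ≤ N/2`, `∑_{|k| > N/2} |k| |F̂(k)|² ≤ C (u² + v²) L e^{-L}` (the sum converging);
in particular, if `L_N → ∞` and `L_N/N → 0`, the tail sum tends to `0`. -/
theorem tail_variance_sum_bound :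
    (∃ C : ℝ, 0 < C ∧
      ∀ (u v : ℝ) (N : ℕ), 0 < N → ∀ L : ℝ, 1 ≤ L → L ≤ N / 2 →
        Summable (fun k : ℤ =>
          if (N : ℝ) / 2 < |(k : ℝ)| then |(k : ℝ)| * ‖Fhat N L u v k‖ ^ 2 else 0)
        ∧ tailSum N L u v ≤ C * (u ^ 2 + v ^ 2) * L * Real.exp (-L))
    ∧ ∀ (u v : ℝ) (L : ℕ → ℝ),
        (∀ N : ℕ, 0 < N → 1 ≤ L N ∧ L N ≤ N / 2) →
        Tendsto L atTop atTop →
        Tendsto (fun N : ℕ => L N / N) atTop (nhds 0) →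
        Tendsto (fun N : ℕ => tailSum N (L N) u v) atTop (nhds 0) := by
  have hmain : ∀ (u v : ℝ) (N : ℕ), 0 < N → ∀ L : ℝ, 1 ≤ L → L ≤ N / 2 →
      Summable (fun k : ℤ =>
        if (N : ℝ) / 2 < |(k : ℝ)| then |(k : ℝ)| * ‖Fhat N L u v k‖ ^ 2 else 0)
      ∧ tailSum N L u v ≤ 2 * (u ^ 2 + v ^ 2) * L * Real.exp (-L) := by
    intro u v N hN L hL1 hL2
    obtain ⟨h1, h2⟩ := key_bound u v N hN L hL1 hL2
    exact ⟨h1, by rw [tailSum]; exact h2⟩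
  constructor
  · exact ⟨2, by norm_num, hmain⟩
  · intro u v L hL hLtop _
    have hub : ∀ᶠ N : ℕ in atTop, tailSum N (L N) u v
        ≤ 2 * (u ^ 2 + v ^ 2) * ((L N) ^ 1 * Real.exp (-(L N))) := by
      filter_upwards [eventually_gt_atTop 0] with N hN
      have := (hmain u v N hN (L N) (hL N hN).1 (hL N hN).2).2
      calc tailSum N (L N) u v ≤ 2 * (u ^ 2 + v ^ 2) * (L N) * Real.exp (-(L N)) := this
      _ = 2 * (u ^ 2 + v ^ 2) * ((L N) ^ 1 * Real.exp (-(L N))) := by ring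
    have hlb : ∀ᶠ N : ℕ in atTop, 0 ≤ tailSum N (L N) u v := by
      filter_upwards with N
      apply tsum_nonneg
      intro k
      split_ifs
      · positivity
      · exact le_rfl
    have htop : Tendsto (fun N : ℕ => 2 * (u ^ 2 + v ^ 2) * ((L N) ^ 1 * Real.exp (-(L N))))
        atTop (nhds 0) := by
      have h0 : Tendsto (fun N : ℕ => (L N) ^ 1 * Real.exp (-(L N))) atTop (nhds 0) :=
        (Real.tendsto_pow_mul_exp_neg_atTop_nhds_zero 1).comp hLtop
      have := h0.const_mul (2 * (u ^ 2 + v ^ 2))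
      rwa [mul_zero] at this
    exact tendsto_of_tendsto_of_tendsto_of_le_of_le' tendsto_const_nhds htop hlb hub
end

section
/- There exists an absolute constant C > 0 such that for every integer N ≥ 2 and every real θ with −π < θ ≤ π, one has |(1 − 1/N) − e^{iθ}| ≥ C · |log(1 − 1/N) − iθ|. -/
set_option maxHeartbeats 1000000 in
/-- There is an absolute constant `C > 0` such that for every integer `N ≥ 2`
and every real `θ` with `-π < θ ≤ π`, one has
`|(1 - 1/N) - e^{iθ}| ≥ C · |log(1 - 1/N) - iθ|`. -/
theorem circle_vs_line_distance :
    ∃ C : ℝ, 0 < C ∧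
      ∀ (N : ℕ), 2 ≤ N →
        ∀ θ : ℝ, -Real.pi < θ → θ ≤ Real.pi →
          ‖(((1 - 1 / N : ℝ) : ℂ) - Complex.exp (Complex.I * θ))‖
            ≥ C * ‖(((Real.log (1 - 1 / N) : ℝ) : ℂ) - Complex.I * θ)‖ := by
  refine ⟨1/5, by norm_num, ?_⟩
  intro N hN θ hθ1 hθ2
  have hpi : (0:ℝ) < Real.pi := Real.pi_pos
  have hN2 : (2:ℝ) ≤ (N:ℝ) := by exact_mod_cast hN
  have hNpos : (0:ℝ) < N := by linarith
  have hinv : (1:ℝ)/N ≤ 1/2 := by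
    rw [div_le_div_iff₀ hNpos (by norm_num)]; linarith
  have hinvpos : (0:ℝ) < 1/N := by positivity
  set r : ℝ := 1 - 1/N with hrdef
  have hrlb : (1/2:ℝ) ≤ r := by rw [hrdef]; linarith
  have hrub : r < 1 := by rw [hrdef]; linarith
  clear_value r
  have hrpos : (0:ℝ) < r := by linarith
  -- log bound: |log r| ≤ 2(1-r)
  have hlogle : -Real.log r ≤ 2 * (1 - r) := by
    have h1 : Real.log r⁻¹ ≤ r⁻¹ - 1 := Real.log_le_sub_one_of_pos (by positivity)
    rw [Real.log_inv] at h1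
    have h2 : r⁻¹ - 1 = (1 - r)/r := by field_simp
    have h3 : (1 - r)/r ≤ 2 * (1 - r) := by
      rw [div_le_iff₀ hrpos]
      nlinarith [mul_le_mul_of_nonneg_left hrlb (by linarith : (0:ℝ) ≤ 2*(1-r))]
    linarith
  have hlognonneg : Real.log r ≤ 0 := Real.log_nonpos (by linarith) (by linarith)
  have hlogsq : (Real.log r)^2 ≤ 4 * (1 - r)^2 := by nlinarith
  -- cos bound: 1 - cos θ ≥ 2 θ² / π²
  have hcos : 2 * (θ^2 / Real.pi^2) ≤ 1 - Real.cos θ := by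
    have habs : |θ| ≤ Real.pi := abs_le.mpr ⟨by linarith, hθ2⟩
    have hsin : 2/Real.pi * (|θ|/2) ≤ Real.sin (|θ|/2) :=
      Real.mul_le_sin (by positivity) (by linarith [abs_nonneg θ])
    have hc : Real.cos θ = 1 - 2 * Real.sin (θ/2)^2 := by
      have h1 := Real.cos_two_mul' (θ/2)
      have h2 := Real.sin_sq_add_cos_sq (θ/2)
      have h3 : 2*(θ/2) = θ := by ring
      rw [h3] at h1
      linarith
    have hsinabs : Real.sin (|θ|/2) ^ 2 = Real.sin (θ/2)^2 := by
      rcases abs_choice θ with h | h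
      · rw [h]
      · rw [h, neg_div, Real.sin_neg, neg_sq]
    have hsq : (2/Real.pi * (|θ|/2))^2 ≤ Real.sin (θ/2)^2 := by
      rw [← hsinabs]
      have h0 : (0:ℝ) ≤ 2/Real.pi * (|θ|/2) := by positivity
      nlinarith
    have he : (2/Real.pi * (|θ|/2))^2 = θ^2/Real.pi^2 := by
      rw [mul_pow, div_pow, div_pow, sq_abs]; field_simp
    rw [he] at hsq
    rw [hc]
    linarith
  -- compute squared moduli
  set A := ‖(((r : ℝ) : ℂ) - Complex.exp (Complex.I * θ))‖ with hA
  set B := ‖(((Real.log r : ℝ) : ℂ) - Complex.I * θ)‖ with hB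
  have hAnn : 0 ≤ A := norm_nonneg _
  have hBnn : 0 ≤ B := norm_nonneg _
  have hz : A^2 = (r - Real.cos θ)^2 + (Real.sin θ)^2 := by
    rw [hA, mul_comm, Complex.exp_mul_I, Complex.sq_norm, Complex.normSq_apply]
    simp [Complex.cos_ofReal_re, Complex.sin_ofReal_re]
    ring
  have hw : B^2 = (Real.log r)^2 + θ^2 := by
    rw [hB, Complex.sq_norm, Complex.normSq_apply]
    simp
    ring
  clear_value A B
  -- key squared inequality
  have hkey : ((1/5 : ℝ) * B)^2 ≤ A^2 := by
    rw [mul_pow, hw, hz]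
    have hexpand : (r - Real.cos θ)^2 + (Real.sin θ)^2
        = (1 - r)^2 + 2*r*(1 - Real.cos θ) := by
      linear_combination Real.sin_sq_add_cos_sq θ
    rw [hexpand]
    have hpisq : Real.pi^2 ≤ 25 := by nlinarith [Real.pi_le_four]
    have hcnn : (0:ℝ) ≤ 1 - Real.cos θ := by linarith [Real.cos_le_one θ]
    have h1 : θ^2/25 ≤ 2*r*(1 - Real.cos θ) := by
      have ha : 1*(1 - Real.cos θ) ≤ (2*r)*(1 - Real.cos θ) :=
        mul_le_mul_of_nonneg_right (by linarith) hcnn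
      have hb : θ^2/25 ≤ θ^2/Real.pi^2 := by gcongr
      have hc2 : (0:ℝ) ≤ θ^2/Real.pi^2 := by positivity
      nlinarith
    have h2 : (Real.log r)^2/25 ≤ (1 - r)^2 := by nlinarith
    linarith
  have hfin := Real.sqrt_le_sqrt hkey
  rw [Real.sqrt_sq (by positivity), Real.sqrt_sq hAnn] at hfin
  exact hfin
end
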